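/- arXiv:2007.12602 — 10 statements merged into one kernel-verified Lean document; each statement's English description precedes it below -/
import Mathlib

section
/- The Eulerian polynomial E_n(x) satisfies the Frobenius formula: E_n(x) = Σ_{i=1}^n i!·S(n,i)·x^i·(1-x)^(n-i) for all n ≥ 1. -/
open Polynomial

/-- Stirling numbers of the second kind. -/
def stirling2 : ℕ → ℕ → ℕ
  | 0, 0 => 1
  | 0, _ + 1 => 0
  | _ + 1, 0 => 0
  | n + 1, k + 1 => (k + 1) * stirling2 n (k + 1) + stirling2 n k

open Classical in
/-- The number of descents of a permutation of `{0, 1, ..., n-1}`: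
positions `i` with `i + 1 < n` and `π(i) > π(i+1)`. -/
noncomputable def descNum {n : ℕ} (π : Equiv.Perm (Fin n)) : ℕ :=
  ((Finset.range (n - 1)).filter fun i =>
    ∃ h : i + 1 < n, π ⟨i + 1, h⟩ < π ⟨i, Nat.lt_of_succ_lt h⟩).card

namespace Frob

open Finset

open Classical in
noncomputable def desSet {n : ℕ} (π : Equiv.Perm (Fin n)) : Finset ℕ :=
  (Finset.range (n - 1)).filter fun i =>
    ∃ h : i + 1 < n, π ⟨i + 1, h⟩ < π ⟨i, Nat.lt_of_succ_lt h⟩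

lemma descNum_eq {n : ℕ} (π : Equiv.Perm (Fin n)) : descNum π = (desSet π).card := rfl

lemma desSet_subset {n : ℕ} (π : Equiv.Perm (Fin n)) : desSet π ⊆ Finset.range (n-1) :=
  Finset.filter_subset _ _

lemma mem_desSet {n : ℕ} (π : Equiv.Perm (Fin n)) (a : ℕ) :
    a ∈ desSet π ↔ a < n - 1 ∧ ∃ h : a + 1 < n, π ⟨a + 1, h⟩ < π ⟨a, Nat.lt_of_succ_lt h⟩ := by
  simp [desSet]

/-- number of elements of `S` below `p` -/
def cnt (S : Finset ℕ) (p : ℕ) : ℕ := (S.filter (· < p)).card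

lemma cnt_mono (S : Finset ℕ) {p q : ℕ} (h : p ≤ q) : cnt S p ≤ cnt S q := by
  apply Finset.card_le_card
  apply Finset.monotone_filter_right
  intro a _ ha
  exact lt_of_lt_of_le ha h

lemma cnt_zero (S : Finset ℕ) : cnt S 0 = 0 := by simp [cnt]

lemma cnt_le_card (S : Finset ℕ) (p : ℕ) : cnt S p ≤ S.card :=
  Finset.card_le_card (Finset.filter_subset _ _)

lemma cnt_succ (S : Finset ℕ) (p : ℕ) :
    cnt S (p + 1) = cnt S p + (if p ∈ S then 1 else 0) := by
  unfold cnt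
  have : S.filter (· < p + 1) = (S.filter (· < p)) ∪ S.filter (· = p) := by
    ext a
    simp only [Finset.mem_filter, Finset.mem_union]
    constructor
    · rintro ⟨ha, hlt⟩
      rcases Nat.lt_succ_iff_lt_or_eq.1 hlt with h | h
      · exact Or.inl ⟨ha, h⟩
      · exact Or.inr ⟨ha, h⟩
    · rintro (⟨ha, h⟩ | ⟨ha, h⟩)
      · exact ⟨ha, Nat.lt_succ_of_lt h⟩
      · exact ⟨ha, by omega⟩
  rw [this, Finset.card_union_of_disjoint]
  · congr 1
    by_cases hp : p ∈ S
    · rw [if_pos hp]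
      rw [Finset.filter_eq']
      simp [hp]
    · rw [if_neg hp]
      rw [Finset.filter_eq']
      simp [hp]
  · rw [Finset.disjoint_left]
    intro a ha hb
    simp only [Finset.mem_filter] at ha hb
    omega

lemma cnt_all (S : Finset ℕ) (p : ℕ) (h : ∀ s ∈ S, s < p) : cnt S p = S.card := by
  unfold cnt
  rw [Finset.filter_true_of_mem h]

lemma cnt_ivt (S : Finset ℕ) : ∀ p j, j ≤ cnt S p → ∃ q, q ≤ p ∧ cnt S q = j := by
  intro p
  induction p with
  | zero =>
    intro j hj
    rw [cnt_zero] at hj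
    interval_cases j
    exact ⟨0, le_refl _, cnt_zero S⟩
  | succ p ih =>
    intro j hj
    by_cases h : j ≤ cnt S p
    · obtain ⟨q, hq1, hq2⟩ := ih j h
      exact ⟨q, le_trans hq1 (Nat.le_succ _), hq2⟩
    · refine ⟨p + 1, le_refl _, ?_⟩
      have := cnt_succ S p
      split_ifs at this <;> omega


noncomputable def toFun {n : ℕ} (π : Equiv.Perm (Fin n)) (S : Finset ℕ) {i : ℕ} (hS : S.card < i) :
    Fin n → Fin i := fun x => ⟨cnt S ((π.symm x : Fin n) : ℕ), lt_of_le_of_lt (cnt_le_card S _) hS⟩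

lemma toFun_apply_perm {n : ℕ} (π : Equiv.Perm (Fin n)) (S : Finset ℕ) {i : ℕ} (hS : S.card < i)
    (q : Fin n) : (toFun π S hS (π q) : ℕ) = cnt S (q : ℕ) := by
  simp [toFun]

lemma cnt_le_iff {n : ℕ} (π : Equiv.Perm (Fin n)) (S : Finset ℕ) {i : ℕ} (hS : S.card < i)
    (p : Fin n) (j : ℕ) :
    cnt S (p : ℕ) ≤ j ↔
      (p : ℕ) < (Finset.univ.filter fun x : Fin n => ((toFun π S hS x : ℕ) ≤ j)).card := by
  have hcard : (Finset.univ.filter fun x : Fin n => ((toFun π S hS x : ℕ) ≤ j)).card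
      = (Finset.univ.filter fun q : Fin n => cnt S (q : ℕ) ≤ j).card := by
    apply Finset.card_equiv π.symm
    intro x
    simp only [Finset.mem_filter, Finset.mem_univ, true_and, toFun]
    exact ⟨fun h => (Finset.mem_filter.1 h).2, fun h => Finset.mem_filter.2 ⟨Finset.mem_univ _, h⟩⟩
  rw [hcard]
  constructor
  · intro h
    have hsub : Finset.Iic p ⊆ Finset.univ.filter fun q : Fin n => cnt S (q : ℕ) ≤ j := by
      intro q hq
      simp only [Finset.mem_Iic] at hq
      simp only [Finset.mem_filter, Finset.mem_univ, true_and]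
      exact le_trans (cnt_mono S (by exact_mod_cast hq)) h
    have := Finset.card_le_card hsub
    rw [Fin.card_Iic] at this
    omega
  · intro h
    by_contra hc
    push_neg at hc
    have hsub : (Finset.univ.filter fun q : Fin n => cnt S (q : ℕ) ≤ j) ⊆ Finset.Iio p := by
      intro q hq
      simp only [Finset.mem_filter, Finset.mem_univ, true_and] at hq
      simp only [Finset.mem_Iio]
      by_contra hqp
      push_neg at hqp
      exact absurd (le_trans (cnt_mono S (by exact_mod_cast hqp)) hq) (by omega)
    have := Finset.card_le_card hsub
    rw [Fin.card_Iio] at this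
    omega

lemma step_lt {n : ℕ} (π : Equiv.Perm (Fin n)) (S : Finset ℕ) (hdes : desSet π ⊆ S)
    (a : ℕ) (ha : a + 1 < n) (hc : cnt S (a + 1) = cnt S a) :
    π ⟨a, Nat.lt_of_succ_lt ha⟩ < π ⟨a + 1, ha⟩ := by
  have hnS : a ∉ S := by
    intro hmem
    have := cnt_succ S a
    rw [if_pos hmem] at this
    omega
  have hnd : a ∉ desSet π := fun h => hnS (hdes h)
  rw [mem_desSet] at hnd
  push_neg at hnd
  have hle : π ⟨a, Nat.lt_of_succ_lt ha⟩ ≤ π ⟨a + 1, ha⟩ := hnd (by omega) ha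
  have hne : π ⟨a, Nat.lt_of_succ_lt ha⟩ ≠ π ⟨a + 1, ha⟩ := by
    intro h
    have := π.injective h
    simp [Fin.ext_iff] at this
  exact lt_of_le_of_ne hle hne

lemma fiber_mono {n : ℕ} (π : Equiv.Perm (Fin n)) (S : Finset ℕ) (hdes : desSet π ⊆ S) :
    ∀ b a (ha : a < n) (hb : b < n), a < b → cnt S a = cnt S b →
      π ⟨a, ha⟩ < π ⟨b, hb⟩ := by
  intro b
  induction b with
  | zero => intro a ha hb hab; omega
  | succ b ih =>
    intro a ha hb hab hc
    rcases Nat.lt_succ_iff_lt_or_eq.1 hab with h | h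
    · have h1 : cnt S a ≤ cnt S b := cnt_mono S (Nat.le_of_lt h)
      have h2 : cnt S b ≤ cnt S (b + 1) := cnt_mono S (Nat.le_succ _)
      have hb' : b < n := Nat.lt_of_succ_lt hb
      have e1 : cnt S a = cnt S b := by omega
      have e2 : cnt S (b + 1) = cnt S b := by omega
      exact lt_trans (ih a ha hb' h e1) (step_lt π S hdes b hb e2)
    · subst h
      exact step_lt π S hdes a hb (by omega)


noncomputable def nonDes {n : ℕ} (π : Equiv.Perm (Fin n)) : Finset ℕ :=
  Finset.range (n - 1) \ desSet π

lemma bars_facts {n i : ℕ} (hi : 1 ≤ i) (hin : i ≤ n) (π : Equiv.Perm (Fin n)) (T : Finset ℕ)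
    (hT : T ∈ (nonDes π).powersetCard (n - i)) :
    T ⊆ Finset.range (n - 1) ∧ desSet π ⊆ (Finset.range (n - 1) \ T) ∧
      (Finset.range (n - 1) \ T).card = i - 1 := by
  rw [Finset.mem_powersetCard] at hT
  obtain ⟨hT1, hT2⟩ := hT
  have hTr : T ⊆ Finset.range (n - 1) := hT1.trans (Finset.sdiff_subset)
  refine ⟨hTr, ?_, ?_⟩
  · intro a ha
    rw [Finset.mem_sdiff]
    refine ⟨desSet_subset π ha, fun haT => ?_⟩
    have := hT1 haT
    rw [nonDes, Finset.mem_sdiff] at this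
    exact this.2 ha
  · rw [Finset.card_sdiff_of_subset hTr, Finset.card_range, hT2]
    omega

lemma inj_aux {n i : ℕ} (hi : 1 ≤ i) (hin : i ≤ n)
    (π π' : Equiv.Perm (Fin n)) (T T' : Finset ℕ)
    (hT : T ∈ (nonDes π).powersetCard (n - i)) (hT' : T' ∈ (nonDes π').powersetCard (n - i))
    (hS : (Finset.range (n - 1) \ T).card < i) (hS' : (Finset.range (n - 1) \ T').card < i)
    (heq : toFun π (Finset.range (n - 1) \ T) hS = toFun π' (Finset.range (n - 1) \ T') hS') :
    π = π' ∧ T = T' := by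
  set S := Finset.range (n - 1) \ T with hSdef
  set S' := Finset.range (n - 1) \ T' with hS'def
  obtain ⟨hTr, hdesS, hScard⟩ := bars_facts hi hin π T hT
  obtain ⟨hTr', hdesS', hScard'⟩ := bars_facts hi hin π' T' hT'
  -- step 1 : the counting functions agree
  have hcnt : ∀ p : Fin n, cnt S (p : ℕ) = cnt S' (p : ℕ) := by
    intro p
    have key : ∀ j, (cnt S (p : ℕ) ≤ j ↔ cnt S' (p : ℕ) ≤ j) := by
      intro j
      rw [cnt_le_iff π S hS p j, cnt_le_iff π' S' hS' p j, heq]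
    exact le_antisymm ((key _).2 le_rfl) ((key _).1 le_rfl)
  -- step 2 : S = S'
  have hsubs : ∀ (U V : Finset ℕ), U ⊆ Finset.range (n - 1) →
      (∀ p : Fin n, cnt U (p : ℕ) = cnt V (p : ℕ)) → U ⊆ V := by
    intro U V hUsub hUV a haU
    have ha : a < n - 1 := Finset.mem_range.1 (hUsub haU)
    have h1 : cnt U (a + 1) = cnt U a + 1 := by rw [cnt_succ, if_pos haU]
    have e1 : cnt U a = cnt V a := hUV ⟨a, by omega⟩
    have e2 : cnt U (a + 1) = cnt V (a + 1) := hUV ⟨a + 1, by omega⟩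
    have h2 := cnt_succ V a
    by_cases haV : a ∈ V
    · exact haV
    · rw [if_neg haV] at h2
      omega
  have hSS : S = S' :=
    Finset.Subset.antisymm (hsubs S S' (Finset.sdiff_subset) hcnt)
      (hsubs S' S (Finset.sdiff_subset) fun p => (hcnt p).symm)
  have hTT : T = T' := by
    have e1 : Finset.range (n - 1) \ S = T := by
      rw [hSdef, sdiff_sdiff_right_self, Finset.inf_eq_inter,
        Finset.inter_eq_right.2 hTr]
    have e2 : Finset.range (n - 1) \ S' = T' := by
      rw [hS'def, sdiff_sdiff_right_self, Finset.inf_eq_inter,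
        Finset.inter_eq_right.2 hTr']
    rw [← e1, ← e2, hSS]
  -- step 3 : π = π'
  have hfq : ∀ r : Fin n, cnt S ((π'.symm (π r) : Fin n) : ℕ) = cnt S (r : ℕ) := by
    intro r
    have := congrFun heq (π r)
    have hval : cnt S ((π.symm (π r) : Fin n) : ℕ) = cnt S' ((π'.symm (π r) : Fin n) : ℕ) := by
      simpa [toFun, Fin.ext_iff] using this
    rw [Equiv.symm_apply_apply] at hval
    rw [← hSS] at hval
    exact hval.symm
  have hmono : StrictMono (fun r : Fin n => π'.symm (π r)) := by
    intro p q hpq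
    have hle : cnt S (p : ℕ) ≤ cnt S (q : ℕ) := cnt_mono S (by exact_mod_cast hpq.le)
    rcases lt_or_eq_of_le hle with hlt | heqc
    · by_contra hc
      push_neg at hc
      have : cnt S ((π'.symm (π q) : Fin n) : ℕ) ≤ cnt S ((π'.symm (π p) : Fin n) : ℕ) :=
        cnt_mono S (by exact_mod_cast hc)
      rw [hfq p, hfq q] at this
      omega
    · have hppq : π p < π q := by
        have := fiber_mono π S hdesS (q : ℕ) (p : ℕ) p.isLt q.isLt
          (by exact_mod_cast hpq) heqc
        simpa using this
      by_contra hc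
      push_neg at hc
      have hne : π'.symm (π q) ≠ π'.symm (π p) := by
        intro h
        exact hpq.ne' (π.injective (π'.symm.injective h))
      have hlt2 : π'.symm (π q) < π'.symm (π p) := lt_of_le_of_ne hc hne
      have hcc : cnt S' ((π'.symm (π q) : Fin n) : ℕ) = cnt S' ((π'.symm (π p) : Fin n) : ℕ) := by
        rw [← hSS, hfq p, hfq q, ← heqc]
      have := fiber_mono π' S' hdesS' ((π'.symm (π p) : Fin n) : ℕ) ((π'.symm (π q) : Fin n) : ℕ)
        (π'.symm (π q)).isLt (π'.symm (π p)).isLt (by exact_mod_cast hlt2) hcc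
      simp only [Fin.eta, Equiv.apply_symm_apply] at this
      exact absurd hppq (by omega)
  have hrho : (fun r : Fin n => π'.symm (π r)) = (id : Fin n → Fin n) := by
    haveI : WellFoundedLT (Fin n) := inferInstance
    refine (StrictMono.range_inj hmono strictMono_id).1 ?_
    rw [Set.range_id]
    exact Equiv.range_eq_univ (π.trans π'.symm)
  refine ⟨?_, hTT⟩
  apply Equiv.ext
  intro x
  have := congrFun hrho x
  simp only [id] at this
  calc π x = π' (π'.symm (π x)) := (π'.apply_symm_apply _).symm
    _ = π' x := by rw [this]


lemma bars_card_lt {n i : ℕ} (hi : 1 ≤ i) (hin : i ≤ n) (π : Equiv.Perm (Fin n)) (T : Finset ℕ)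
    (hT : T ∈ (nonDes π).powersetCard (n - i)) : (Finset.range (n - 1) \ T).card < i := by
  have := (bars_facts hi hin π T hT).2.2
  omega

lemma toFun_surjective {n i : ℕ} (hi : 1 ≤ i) (hin : i ≤ n) (π : Equiv.Perm (Fin n))
    (T : Finset ℕ) (hT : T ∈ (nonDes π).powersetCard (n - i)) :
    Function.Surjective (toFun π (Finset.range (n - 1) \ T) (bars_card_lt hi hin π T hT)) := by
  intro j
  set S := Finset.range (n - 1) \ T with hSdef
  obtain ⟨hTr, hdesS, hScard⟩ := bars_facts hi hin π T hT
  have hcntall : cnt S (n - 1) = S.card := by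
    apply cnt_all
    intro s hs
    have : s ∈ Finset.range (n - 1) := Finset.sdiff_subset hs
    exact Finset.mem_range.1 this
  have hj : (j : ℕ) ≤ cnt S (n - 1) := by
    rw [hcntall, hScard]
    have := j.isLt
    omega
  obtain ⟨q, hq1, hq2⟩ := cnt_ivt S (n - 1) (j : ℕ) hj
  have hqn : q < n := by omega
  refine ⟨π ⟨q, hqn⟩, ?_⟩
  apply Fin.ext
  rw [toFun_apply_perm]
  exact hq2

open Classical in
lemma surj_aux {n i : ℕ} (hi : 1 ≤ i) (hin : i ≤ n) (f : Fin n → Fin i)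
    (hf : Function.Surjective f) :
    ∃ (π : Equiv.Perm (Fin n)) (T : Finset ℕ)
      (hT : T ∈ (nonDes π).powersetCard (n - i))
      (hS : (Finset.range (n - 1) \ T).card < i),
      toFun π (Finset.range (n - 1) \ T) hS = f := by
  have hn : 1 ≤ n := le_trans hi hin
  set σ := Tuple.sort f with hσdef
  obtain ⟨hmono, hstab⟩ := (Tuple.eq_sort_iff (σ := σ) (f := f)).1 hσdef
  set Sf : Finset ℕ := (Finset.range (n - 1)).filter
    (fun p => ∃ h : p + 1 < n, f (σ ⟨p + 1, h⟩) ≠ f (σ ⟨p, Nat.lt_of_succ_lt h⟩)) with hSfdef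
  have hSfsub : Sf ⊆ Finset.range (n - 1) := Finset.filter_subset _ _
  -- C1
  have C1 : ∀ p (hp : p < n), cnt Sf p = (f (σ ⟨p, hp⟩) : ℕ) := by
    intro p
    induction p with
    | zero =>
      intro hp
      rw [cnt_zero]
      obtain ⟨x, hx⟩ := hf ⟨0, by omega⟩
      have : f (σ ⟨0, hp⟩) ≤ f (σ (σ.symm x)) := by
        apply hmono (a := ⟨0, hp⟩) (b := σ.symm x)
        simp [Fin.le_iff_val_le_val]
      rw [Equiv.apply_symm_apply, hx] at this
      have h2 := Fin.le_iff_val_le_val.1 this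
      simp at h2
      omega
    | succ p ih =>
      intro hp
      have hpn : p < n := Nat.lt_of_succ_lt hp
      rw [cnt_succ, ih hpn]
      by_cases hmem : p ∈ Sf
      · rw [if_pos hmem]
        rw [hSfdef, Finset.mem_filter] at hmem
        obtain ⟨hpr, h', hne⟩ := hmem
        have hlt : f (σ ⟨p, hpn⟩) < f (σ ⟨p + 1, hp⟩) := by
          have hle : f (σ ⟨p, hpn⟩) ≤ f (σ ⟨p + 1, hp⟩) :=
            hmono (by simp [Fin.le_iff_val_le_val])
          have : f (σ ⟨p + 1, h'⟩) ≠ f (σ ⟨p, Nat.lt_of_succ_lt h'⟩) := hne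
          exact lt_of_le_of_ne hle (fun hh => this (by simpa using hh.symm))
        -- the jump is exactly one
        by_contra hc
        have hjump : (f (σ ⟨p, hpn⟩) : ℕ) + 1 < (f (σ ⟨p + 1, hp⟩) : ℕ) := by
          have := Fin.lt_iff_val_lt_val.1 hlt
          omega
        set v : Fin i := ⟨(f (σ ⟨p, hpn⟩) : ℕ) + 1, by
          have := (f (σ ⟨p + 1, hp⟩)).isLt; omega⟩ with hvdef
        obtain ⟨x, hx⟩ := hf v
        set q := σ.symm x with hqdef
        have hgq : f (σ q) = v := by rw [Equiv.apply_symm_apply]; exact hx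
        rcases le_or_gt (q : ℕ) p with hqp | hqp
        · have : f (σ q) ≤ f (σ ⟨p, hpn⟩) := hmono (by simp [Fin.le_iff_val_le_val]; exact hqp)
          rw [hgq] at this
          have := Fin.le_iff_val_le_val.1 this
          simp [hvdef] at this
        · have : f (σ ⟨p + 1, hp⟩) ≤ f (σ q) := hmono (by simp [Fin.le_iff_val_le_val]; exact hqp)
          rw [hgq] at this
          have := Fin.le_iff_val_le_val.1 this
          simp [hvdef] at this
          omega
      · rw [if_neg hmem]
        rw [hSfdef, Finset.mem_filter] at hmem
        push_neg at hmem
        have hpr : p ∈ Finset.range (n - 1) := Finset.mem_range.2 (by omega)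
        have := hmem hpr hp
        rw [this]
        omega
  -- C3
  have htop : cnt Sf (n - 1) = i - 1 := by
    have hn1 : n - 1 < n := by omega
    rw [C1 (n - 1) hn1]
    obtain ⟨x, hx⟩ := hf ⟨i - 1, by omega⟩
    have h1 : f (σ (σ.symm x)) ≤ f (σ ⟨n - 1, hn1⟩) := by
      apply hmono
      simp [Fin.le_iff_val_le_val]
      have := (σ.symm x).isLt
      omega
    rw [Equiv.apply_symm_apply, hx] at h1
    have h2 := (f (σ ⟨n - 1, hn1⟩)).isLt
    have h3 := Fin.le_iff_val_le_val.1 h1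
    simp at h3
    omega
  have hSfcard : Sf.card = i - 1 := by
    rw [← htop]
    symm
    apply cnt_all
    intro s hs
    exact Finset.mem_range.1 (hSfsub hs)
  -- C4
  have hdes : desSet σ ⊆ Sf := by
    intro a ha
    rw [mem_desSet] at ha
    obtain ⟨ha1, h', hlt⟩ := ha
    rw [hSfdef, Finset.mem_filter]
    refine ⟨Finset.mem_range.2 ha1, h', fun heq => ?_⟩
    have := hstab ⟨a, Nat.lt_of_succ_lt h'⟩ ⟨a + 1, h'⟩ (by simp [Fin.lt_iff_val_lt_val]) heq.symm
    exact absurd hlt (by omega)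
  set T := Finset.range (n - 1) \ Sf with hTdef
  have hbars : Finset.range (n - 1) \ T = Sf := by
    rw [hTdef, sdiff_sdiff_right_self, Finset.inf_eq_inter, Finset.inter_eq_right.2 hSfsub]
  have hT : T ∈ (nonDes σ).powersetCard (n - i) := by
    rw [Finset.mem_powersetCard]
    constructor
    · rw [hTdef, nonDes]
      exact Finset.sdiff_subset_sdiff (Finset.Subset.refl _) hdes
    · rw [hTdef, Finset.card_sdiff_of_subset hSfsub, Finset.card_range, hSfcard]
      omega
  have hS : (Finset.range (n - 1) \ T).card < i := by
    rw [hbars, hSfcard]; omega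
  refine ⟨σ, T, hT, hS, ?_⟩
  funext x
  apply Fin.ext
  show cnt (Finset.range (n - 1) \ T) ((σ.symm x : Fin n) : ℕ) = (f x : ℕ)
  rw [hbars, C1 ((σ.symm x : Fin n) : ℕ) (σ.symm x).isLt]
  congr 1
  rw [Fin.eta, Equiv.apply_symm_apply]


lemma surj_cons_iff {n : ℕ} {β : Type} (y : β) (g : Fin n → β) :
    Function.Surjective (Fin.cons y g : Fin (n + 1) → β) ↔
      Function.Surjective g ∨ Set.range g = {y}ᶜ := by
  constructor
  · intro hsurj
    by_cases hg : Function.Surjective g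
    · exact Or.inl hg
    · right
      have hsup : ∀ b : β, b ≠ y → b ∈ Set.range g := by
        intro b hb
        obtain ⟨a, ha⟩ := hsurj b
        rcases Fin.eq_zero_or_eq_succ a with rfl | ⟨a', rfl⟩
        · rw [Fin.cons_zero] at ha
          exact absurd ha.symm hb
        · rw [Fin.cons_succ] at ha
          exact ⟨a', ha⟩
      ext b
      simp only [Set.mem_compl_iff, Set.mem_singleton_iff]
      constructor
      · rintro ⟨a, rfl⟩ hby
        apply hg
        intro c
        by_cases hc : c = y
        · exact ⟨a, by rw [hby, hc]⟩
        · exact hsup c hc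
      · exact hsup b
  · rintro (hg | hr) b
    · obtain ⟨a, ha⟩ := hg b
      exact ⟨a.succ, by rwa [Fin.cons_succ]⟩
    · by_cases hb : b = y
      · exact ⟨0, by rw [Fin.cons_zero, hb]⟩
      · have : b ∈ Set.range g := by rw [hr]; simpa using hb
        obtain ⟨a, ha⟩ := this
        exact ⟨a.succ, by rwa [Fin.cons_succ]⟩

def rangeEquiv {n : ℕ} {β : Type} (y : β) :
    {g : Fin n → β // Set.range g = {y}ᶜ} ≃
      {h : Fin n → {b : β // b ≠ y} // Function.Surjective h} where
  toFun g := ⟨fun a => ⟨g.1 a, by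
      have : g.1 a ∈ Set.range g.1 := Set.mem_range_self a
      rw [g.2] at this
      simpa using this⟩, by
    rintro ⟨b, hb⟩
    have : b ∈ Set.range g.1 := by rw [g.2]; simpa using hb
    obtain ⟨a, ha⟩ := this
    exact ⟨a, Subtype.ext ha⟩⟩
  invFun h := ⟨fun a => (h.1 a : β), by
    ext b
    constructor
    · rintro ⟨a, rfl⟩
      simpa using (h.1 a).2
    · intro hb
      obtain ⟨a, ha⟩ := h.2 ⟨b, by simpa using hb⟩
      exact ⟨a, congrArg Subtype.val ha⟩⟩
  left_inv g := Subtype.ext rfl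
  right_inv h := Subtype.ext (funext fun a => Subtype.ext rfl)

lemma card_surj (n : ℕ) : ∀ (β : Type) [Fintype β] [DecidableEq β],
    Fintype.card {f : Fin n → β // Function.Surjective f}
      = (Fintype.card β).factorial * stirling2 n (Fintype.card β) := by
  induction n with
  | zero =>
    intro β _ _
    rcases Nat.eq_zero_or_pos (Fintype.card β) with h0 | hpos
    · haveI : IsEmpty β := Fintype.card_eq_zero_iff.1 h0
      have hall : ∀ f : Fin 0 → β, Function.Surjective f := fun f b => (IsEmpty.false b).elim
      have : Fintype.card {f : Fin 0 → β // Function.Surjective f}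
          = Fintype.card (Fin 0 → β) := Fintype.card_congr (Equiv.subtypeUnivEquiv hall)
      rw [this, h0]
      simp [stirling2]
    · obtain ⟨k, hk⟩ := Nat.exists_eq_succ_of_ne_zero (Nat.pos_iff_ne_zero.1 hpos)
      haveI : Nonempty β := Fintype.card_pos_iff.1 hpos
      have hempty : IsEmpty {f : Fin 0 → β // Function.Surjective f} := by
        constructor
        rintro ⟨f, hf⟩
        obtain ⟨b⟩ := ‹Nonempty β›
        obtain ⟨a, _⟩ := hf b
        exact a.elim0
      rw [Fintype.card_eq_zero, hk]
      simp [stirling2]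
  | succ n ih =>
    intro β _ _
    rcases Nat.eq_zero_or_pos (Fintype.card β) with h0 | hpos
    · haveI : IsEmpty β := Fintype.card_eq_zero_iff.1 h0
      haveI : IsEmpty (Fin (n + 1) → β) := isEmpty_fun.2 ⟨⟨0⟩, inferInstance⟩
      rw [Fintype.card_eq_zero, h0]
      simp [stirling2]
    obtain ⟨k, hk⟩ := Nat.exists_eq_succ_of_ne_zero (Nat.pos_iff_ne_zero.1 hpos)
    classical
    have e1 : {f : Fin (n + 1) → β // Function.Surjective f} ≃
        Σ y : β, {g : Fin n → β // Function.Surjective (Fin.cons y g : Fin (n + 1) → β)} := by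
      refine Equiv.trans ((Fin.consEquiv fun _ : Fin (n + 1) => β).symm.subtypeEquiv fun f => ?_) 
        (Equiv.subtypeProdEquivSigmaSubtype
          (fun y (g : Fin n → β) => Function.Surjective (Fin.cons y g : Fin (n + 1) → β)))
      show Function.Surjective f ↔ Function.Surjective
        ((Fin.consEquiv fun _ => β) ((Fin.consEquiv fun _ => β).symm f))
      rw [Equiv.apply_symm_apply]
    have hy : ∀ y : β, Fintype.card {g : Fin n → β //
        Function.Surjective (Fin.cons y g : Fin (n + 1) → β)}
        = (Fintype.card β).factorial * stirling2 n (Fintype.card β)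
          + (Fintype.card β - 1).factorial * stirling2 n (Fintype.card β - 1) := by
      intro y
      have e2 : {g : Fin n → β // Function.Surjective (Fin.cons y g : Fin (n + 1) → β)} ≃
          {g : Fin n → β // Function.Surjective g ∨ Set.range g = {y}ᶜ} :=
        Equiv.subtypeEquivRight fun g => surj_cons_iff y g
      rw [Fintype.card_congr e2]
      rw [Fintype.card_subtype_or_disjoint _ _ ?hdisj]
      case hdisj =>
        rintro p hp1 hp2 g hg
        have h1 : Function.Surjective g := hp1 g hg
        have h2 : Set.range g = {y}ᶜ := hp2 g hg
        have : y ∈ Set.range g := h1.range_eq ▸ Set.mem_univ y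
        rw [h2] at this
        simp at this
      have hcard : Fintype.card {b : β // b ≠ y} = Fintype.card β - 1 := by
        have h2 : Fintype.card {b : β // ¬ b = y}
            = Fintype.card β - Fintype.card {b : β // b = y} :=
          Fintype.card_subtype_compl _
        rw [Fintype.card_subtype_eq] at h2
        exact h2
      have hB : Fintype.card {g : Fin n → β // Set.range g = {y}ᶜ}
          = (Fintype.card β - 1).factorial * stirling2 n (Fintype.card β - 1) := by
        rw [Fintype.card_congr (rangeEquiv y), ih {b : β // b ≠ y}, hcard]
      rw [hB, ih β]
    rw [Fintype.card_congr e1, Fintype.card_sigma]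
    rw [Finset.sum_congr rfl fun y _ => hy y, Finset.sum_const, Finset.card_univ, smul_eq_mul]
    rw [hk]
    simp only [Nat.succ_sub_one]
    show (k + 1) * ((k + 1).factorial * stirling2 n (k + 1) + k.factorial * stirling2 n k)
      = (k + 1).factorial * stirling2 (n + 1) (k + 1)
    rw [show stirling2 (n + 1) (k + 1) = (k + 1) * stirling2 n (k + 1) + stirling2 n k from rfl]
    rw [Nat.factorial_succ]
    ring

open Classical in
lemma pair_card {n i : ℕ} (hi : 1 ≤ i) (hin : i ≤ n) :
    ((Finset.univ : Finset (Equiv.Perm (Fin n))).sigma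
        fun π => (nonDes π).powersetCard (n - i)).card
      = (Finset.univ.filter fun f : Fin n → Fin i => Function.Surjective f).card := by
  apply Finset.card_bij (fun a ha => toFun a.1 (Finset.range (n - 1) \ a.2)
      (bars_card_lt hi hin a.1 a.2 (Finset.mem_sigma.1 ha).2))
  · intro a ha
    simp only [Finset.mem_filter, Finset.mem_univ, true_and]
    exact toFun_surjective hi hin a.1 a.2 (Finset.mem_sigma.1 ha).2
  · intro a1 ha1 a2 ha2 h
    obtain ⟨h1, h2⟩ := inj_aux hi hin a1.1 a2.1 a1.2 a2.2 (Finset.mem_sigma.1 ha1).2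
      (Finset.mem_sigma.1 ha2).2 _ _ h
    exact Sigma.ext h1 (heq_of_eq h2)
  · intro f hf
    simp only [Finset.mem_filter, Finset.mem_univ, true_and] at hf
    obtain ⟨π, T, hT, hS, heq⟩ := surj_aux hi hin f hf
    exact ⟨⟨π, T⟩, Finset.mem_sigma.2 ⟨Finset.mem_univ _, hT⟩, heq⟩

open Classical in
lemma lemK {n i : ℕ} (hi : 1 ≤ i) (hin : i ≤ n) :
    (∑ π : Equiv.Perm (Fin n), Nat.choose (n - 1 - descNum π) (n - i))
      = Nat.factorial i * stirling2 n i := by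
  have h1 : ∀ π : Equiv.Perm (Fin n), (nonDes π).card = n - 1 - descNum π := by
    intro π
    rw [nonDes, Finset.card_sdiff_of_subset (desSet_subset π), Finset.card_range, descNum_eq]
  calc ∑ π : Equiv.Perm (Fin n), Nat.choose (n - 1 - descNum π) (n - i)
      = ∑ π : Equiv.Perm (Fin n), ((nonDes π).powersetCard (n - i)).card := by
        apply Finset.sum_congr rfl
        intro π _
        rw [Finset.card_powersetCard, h1]
    _ = (Finset.univ.sigma fun π : Equiv.Perm (Fin n) =>
          (nonDes π).powersetCard (n - i)).card := (Finset.card_sigma _ _).symm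
    _ = (Finset.univ.filter fun f : Fin n → Fin i => Function.Surjective f).card :=
          pair_card hi hin
    _ = Fintype.card {f : Fin n → Fin i // Function.Surjective f} :=
          (Fintype.card_subtype _).symm
    _ = Nat.factorial i * stirling2 n i := by
          rw [card_surj n (Fin i)]
          simp


lemma pow_expand (n d : ℕ) (hn : 1 ≤ n) (hd : d ≤ n - 1) :
    (X : ℝ[X]) ^ (1 + d) =
      ∑ i ∈ Finset.Icc 1 n,
        C ((Nat.choose (n - 1 - d) (n - i) : ℕ) : ℝ) * X ^ i * (1 - X) ^ (n - i) := by
  have hstep : ∑ i ∈ Finset.Icc 1 n,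
        C ((Nat.choose (n - 1 - d) (n - i) : ℕ) : ℝ) * X ^ i * (1 - X) ^ (n - i)
      = ∑ i ∈ Finset.Icc (d + 1) n,
        C ((Nat.choose (n - 1 - d) (n - i) : ℕ) : ℝ) * X ^ i * (1 - X) ^ (n - i) := by
    symm
    apply Finset.sum_subset
    · apply Finset.Icc_subset_Icc_left
      omega
    · intro x hx hnx
      simp only [Finset.mem_Icc] at hx hnx
      have hz : Nat.choose (n - 1 - d) (n - x) = 0 := Nat.choose_eq_zero_of_lt (by omega)
      rw [hz]
      simp
  set m := n - 1 - d with hm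
  have hnd : n + 1 - (d + 1) = m + 1 := by omega
  rw [hstep, ← Finset.Ico_add_one_right_eq_Icc, Finset.sum_Ico_eq_sum_range, hnd]
  have hterm : ∀ j ∈ Finset.range (m + 1),
      C ((Nat.choose (n - 1 - d) (n - (d + 1 + j)) : ℕ) : ℝ) * X ^ (d + 1 + j)
          * (1 - X) ^ (n - (d + 1 + j))
        = X ^ (d + 1) * (X ^ j * (1 - X) ^ (m - j) * ((Nat.choose m j : ℕ) : ℝ[X])) := by
    intro j hj
    have hj' : j ≤ m := by
      simp only [Finset.mem_range] at hj
      omega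
    have h1 : n - (d + 1 + j) = m - j := by omega
    have h2 : Nat.choose (n - 1 - d) (n - (d + 1 + j)) = Nat.choose m j := by
      rw [h1, ← hm]
      exact Nat.choose_symm hj'
    rw [h2, h1, pow_add, Polynomial.C_eq_natCast]
    ring
  rw [Finset.sum_congr rfl hterm, ← Finset.mul_sum, ← add_pow]
  rw [show (X : ℝ[X]) + (1 - X) = 1 by ring, one_pow, mul_one]
  rw [show 1 + d = d + 1 by omega]

end Frob

theorem eulerian_polynomial_frobenius (n : ℕ) (hn : 1 ≤ n) :
    (∑ π : Equiv.Perm (Fin n), (X : ℝ[X]) ^ (1 + descNum π)) =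
      ∑ i ∈ Finset.Icc 1 n,
        C ((Nat.factorial i * stirling2 n i : ℕ) : ℝ) * X ^ i * (1 - X) ^ (n - i) := by
  have hd : ∀ π : Equiv.Perm (Fin n), descNum π ≤ n - 1 := by
    intro π
    rw [Frob.descNum_eq]
    calc (Frob.desSet π).card ≤ (Finset.range (n - 1)).card :=
          Finset.card_le_card (Frob.desSet_subset π)
      _ = n - 1 := Finset.card_range _
  calc ∑ π : Equiv.Perm (Fin n), (X : ℝ[X]) ^ (1 + descNum π)
      = ∑ π : Equiv.Perm (Fin n), ∑ i ∈ Finset.Icc 1 n,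
          C ((Nat.choose (n - 1 - descNum π) (n - i) : ℕ) : ℝ) * X ^ i * (1 - X) ^ (n - i) :=
        Finset.sum_congr rfl fun π _ => Frob.pow_expand n (descNum π) hn (hd π)
    _ = ∑ i ∈ Finset.Icc 1 n, ∑ π : Equiv.Perm (Fin n),
          C ((Nat.choose (n - 1 - descNum π) (n - i) : ℕ) : ℝ) * X ^ i * (1 - X) ^ (n - i) :=
        Finset.sum_comm
    _ = ∑ i ∈ Finset.Icc 1 n,
          C ((Nat.factorial i * stirling2 n i : ℕ) : ℝ) * X ^ i * (1 - X) ^ (n - i) := by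
        apply Finset.sum_congr rfl
        intro i hi
        obtain ⟨hi1, hi2⟩ := Finset.mem_Icc.1 hi
        rw [← Finset.sum_mul, ← Finset.sum_mul, ← map_sum Polynomial.C _ Finset.univ,
          ← Nat.cast_sum, Frob.lemK hi1 hi2]
end

section
/- Let a_1, b_1 be positive reals and a_2, b_2 be reals, and define the array F_{n,k} by F_{n,k} = (a_1·k + a_2)·F_{n-1,k} + (b_1·k + b_2)·F_{n-1,k-1} with F_{0,0}=1 and F_{n,k}=0 unless 0 ≤ k ≤ n. Then F_{n,k} = C(b_2/b_1 + k, k)·(b_1/a_1)^k·Σ_{j=0}^k C(k,j)·(-1)^(k-j)·(a_2 + a_1·j)^n for all n,k ≥ 0, where C(b_2/b_1 + k, k) denotes the generalized binomial coefficient (b_2/b_1+k)(b_2/b_1+k-1)···(b_2/b_1+1)/k!. -/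
/-- Generalized binomial coefficient `C(x, k) = x(x-1)⋯(x-k+1)/k!` for real `x`. -/
noncomputable def genChoose (x : ℝ) (k : ℕ) : ℝ :=
  (∏ j ∈ Finset.range k, (x - (j : ℝ))) / (Nat.factorial k : ℝ)

open Finset

private lemma choose_mul_sub (k j : ℕ) (h : j ≤ k) :
    (k + 1).choose j * (k + 1 - j) = (k + 1) * k.choose j := by
  obtain ⟨m, rfl⟩ := Nat.exists_eq_add_of_le h
  have h1 : (j + m + 1).choose j = (j + m + 1).choose (m + 1) := by
    rw [← Nat.choose_symm (by omega)]
    congr 1; omega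
  have h2 : j + m + 1 - j = m + 1 := by omega
  rw [h1, h2]
  have := Nat.add_one_mul_choose_eq (j + m) m
  rw [← this]
  congr 1
  rw [← Nat.choose_symm (Nat.le_add_right j m), Nat.add_sub_cancel_left]

private noncomputable def Ssum (a₁ a₂ : ℝ) (n k : ℕ) : ℝ :=
  ∑ j ∈ Finset.range (k + 1), (k.choose j : ℝ) * (-1 : ℝ) ^ (k - j) * (a₂ + a₁ * (j : ℝ)) ^ n

private lemma Ssum_zero (a₁ a₂ : ℝ) (n : ℕ) : Ssum a₁ a₂ n 0 = a₂ ^ n := by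
  simp [Ssum]

private lemma Ssum_base (a₁ a₂ : ℝ) (m : ℕ) : Ssum a₁ a₂ 0 (m + 1) = 0 := by
  have key : ∑ j ∈ Finset.range (m + 2), ((m+1).choose j : ℝ) * (-1 : ℝ) ^ (m + 1 - j) = 0 := by
    rw [← Finset.sum_range_reflect]
    simp only [show m + 2 - 1 = m + 1 from rfl]
    have : ∀ j ∈ Finset.range (m + 2),
        ((m+1).choose (m + 1 - j) : ℝ) * (-1 : ℝ) ^ (m + 1 - (m + 1 - j))
        = (-1:ℝ) ^ j * ((m+1).choose j : ℝ) := by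
      intro j hj
      rw [Finset.mem_range] at hj
      rw [Nat.choose_symm (by omega), show m + 1 - (m + 1 - j) = j by omega, mul_comm]
    rw [Finset.sum_congr rfl this]
    have := Int.alternating_sum_range_choose (n := m + 1)
    rw [if_neg (by omega)] at this
    exact_mod_cast congrArg (Int.cast : ℤ → ℝ) this
  simp only [Ssum, pow_zero, mul_one]
  exact key

private lemma Ssum_rec (a₁ a₂ : ℝ) (n k : ℕ) :
    Ssum a₁ a₂ (n + 1) (k + 1) =
      (a₁ * (k + 1) + a₂) * Ssum a₁ a₂ n (k + 1) + a₁ * (k + 1) * Ssum a₁ a₂ n k := by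
  have key : ∀ j ∈ Finset.range (k + 2),
      ((k+1).choose j : ℝ) * (-1 : ℝ) ^ (k + 1 - j) * (a₂ + a₁ * j) ^ (n+1)
      = (a₁ * (k + 1) + a₂) * (((k+1).choose j : ℝ) * (-1 : ℝ) ^ (k + 1 - j) * (a₂ + a₁ * j) ^ n)
        + a₁ * (if j = k + 1 then 0 else ((k+1) * k.choose j : ℝ) * (-1:ℝ)^(k - j) * (a₂ + a₁*j)^n) := by
    intro j hj
    rw [Finset.mem_range] at hj
    by_cases hjk : j = k + 1
    · subst hjk
      rw [if_pos rfl, mul_zero, add_zero, Nat.choose_self, Nat.sub_self, pow_succ]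
      push_cast
      ring
    · have hle : j ≤ k := by omega
      rw [if_neg hjk]
      have hc : ((k+1).choose j : ℝ) * ((k + 1 - j : ℕ) : ℝ) = ((k+1) : ℝ) * (k.choose j : ℝ) := by
        exact_mod_cast congrArg (Nat.cast : ℕ → ℝ) (choose_mul_sub k j hle)
      have hcast : ((k + 1 - j : ℕ) : ℝ) = (k : ℝ) + 1 - (j : ℝ) := by
        push_cast [Nat.cast_sub (by omega : j ≤ k + 1)]; ring
      have hsign : (-1 : ℝ) ^ (k + 1 - j) = -(-1 : ℝ) ^ (k - j) := by
        rw [show k + 1 - j = (k - j) + 1 by omega, pow_succ]; ring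
      have expand : (a₂ + a₁ * j) ^ (n+1)
          = (a₁ * (k+1) + a₂) * (a₂ + a₁ * j)^n - a₁ * ((k:ℝ) + 1 - j) * (a₂ + a₁ * j)^n := by
        rw [pow_succ]; ring
      rw [expand, hsign]
      rw [hcast] at hc
      push_cast
      linear_combination a₁ * (-1:ℝ)^(k - j) * (a₂ + a₁ * (j:ℝ))^n * hc
  have h2 : ∑ j ∈ Finset.range (k + 2),
      (if j = k + 1 then (0:ℝ) else ((k+1) * k.choose j : ℝ) * (-1:ℝ)^(k - j) * (a₂ + a₁*j)^n)
      = ((k:ℝ) + 1) * Ssum a₁ a₂ n k := by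
    rw [Finset.sum_range_succ, if_pos rfl, add_zero,
      Finset.sum_congr rfl (fun j hj => if_neg (by rw [Finset.mem_range] at hj; omega)),
      Ssum, Finset.mul_sum]
    refine Finset.sum_congr rfl fun j hj => ?_
    push_cast
    ring
  show (∑ j ∈ Finset.range (k + 2), ((k+1).choose j : ℝ) * (-1:ℝ)^(k + 1 - j) * (a₂ + a₁*j)^(n+1)) = _
  rw [Finset.sum_congr rfl key, Finset.sum_add_distrib, ← Finset.mul_sum, ← Finset.mul_sum, h2]
  show (a₁ * ((k:ℝ)+1) + a₂) * Ssum a₁ a₂ n (k+1) + a₁ * (((k:ℝ)+1) * Ssum a₁ a₂ n k) = _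
  push_cast
  ring


private noncomputable def cc (a₁ b₁ b₂ : ℝ) (k : ℕ) : ℝ :=
  genChoose (b₂ / b₁ + (k : ℝ)) k * (b₁ / a₁) ^ k

private lemma cc_rec (a₁ b₁ b₂ : ℝ) (ha₁ : a₁ ≠ 0) (hb₁ : b₁ ≠ 0) (k : ℕ) :
    cc a₁ b₁ b₂ (k + 1) * (a₁ * ((k:ℝ) + 1)) = cc a₁ b₁ b₂ k * (b₁ * ((k:ℝ) + 1) + b₂) := by
  have hprod : ∏ j ∈ Finset.range (k + 1), (b₂ / b₁ + ((k:ℝ) + 1) - (j : ℝ))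
      = (b₂ / b₁ + (k:ℝ) + 1) * ∏ j ∈ Finset.range k, (b₂ / b₁ + (k:ℝ) - (j : ℝ)) := by
    rw [Finset.prod_range_succ']
    have h1 : ∀ j ∈ Finset.range k,
        (b₂ / b₁ + (((k:ℕ):ℝ) + 1) - (((j + 1 : ℕ)):ℝ)) = (b₂ / b₁ + (k:ℝ) - (j:ℝ)) := by
      intro j hj; push_cast; ring
    rw [Finset.prod_congr rfl h1, mul_comm]
    congr 1
    push_cast
    ring
  unfold cc genChoose
  push_cast
  rw [hprod, Nat.factorial_succ]
  have hk : ((Nat.factorial k) : ℝ) ≠ 0 := Nat.cast_ne_zero.mpr (Nat.factorial_ne_zero k)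
  have hk1 : ((k:ℝ) + 1) ≠ 0 := by positivity
  generalize ∏ j ∈ Finset.range k, (b₂ / b₁ + (k:ℝ) - (j : ℝ)) = P
  push_cast
  field_simp
  have ha : a₁ * a₁⁻¹ = 1 := mul_inv_cancel₀ ha₁
  linear_combination (b₂ * b₁ * b₁ ^ k * P * a₁⁻¹ ^ k + b₁ ^ 2 * b₁ ^ k * (k:ℝ) * P * a₁⁻¹ ^ k + b₁ ^ 2 * b₁ ^ k * P * a₁⁻¹ ^ k) * ha

theorem generalized_frobenius_triangle_explicit
    (a₁ a₂ b₁ b₂ : ℝ) (ha₁ : 0 < a₁) (hb₁ : 0 < b₁)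
    (F : ℕ → ℤ → ℝ)
    (h0 : F 0 0 = 1)
    (hb : ∀ (n : ℕ) (k : ℤ), (k < 0 ∨ (n : ℤ) < k) → F n k = 0)
    (hrec : ∀ (n : ℕ) (k : ℤ),
      F (n + 1) k = (a₁ * (k : ℝ) + a₂) * F n k + (b₁ * (k : ℝ) + b₂) * F n (k - 1)) :
    ∀ n k : ℕ, F n (k : ℤ) =
      genChoose (b₂ / b₁ + (k : ℝ)) k * (b₁ / a₁) ^ k *
        ∑ j ∈ Finset.range (k + 1),
          (k.choose j : ℝ) * (-1 : ℝ) ^ (k - j) * (a₂ + a₁ * (j : ℝ)) ^ n := by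
  have key : ∀ n k : ℕ, F n (k : ℤ) = cc a₁ b₁ b₂ k * Ssum a₁ a₂ n k := by
    intro n
    induction n with
    | zero =>
      intro k
      cases k with
      | zero =>
        rw [Nat.cast_zero, h0, cc, Ssum_zero]
        simp [genChoose]
      | succ m =>
        rw [hb 0 (m + 1 : ℕ) (Or.inr (by exact_mod_cast Nat.succ_pos m)), Ssum_base, mul_zero]
    | succ n ih =>
      intro k
      cases k with
      | zero =>
        rw [Nat.cast_zero, hrec n 0]
        rw [hb n (0 - 1) (Or.inl (by norm_num)), mul_zero, add_zero]
        rw [show F n 0 = F n ((0:ℕ):ℤ) from rfl, ih 0]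
        rw [cc, Ssum_zero, Ssum_zero]
        push_cast
        ring
      | succ m =>
        rw [hrec n (m + 1 : ℕ)]
        have e1 : ((m + 1 : ℕ) : ℤ) - 1 = ((m : ℕ) : ℤ) := by push_cast; ring
        rw [e1, ih (m + 1), ih m, Ssum_rec a₁ a₂ n m]
        have hcc := cc_rec a₁ b₁ b₂ (ne_of_gt ha₁) (ne_of_gt hb₁) m
        push_cast
        push_cast at hcc
        linear_combination (-(Ssum a₁ a₂ n m)) * hcc
  intro n k
  exact key n k
end

section
/- Let λ > 0, c, b_1 real with b_1 = d·a_1 - c, and a_0, a_1, a_2, b_0, b_2, d ≥ 0. Define T_{n,k} by the recurrence T_{n,k} = λ(a_0 n + a_1 k + a_2)T_{n-1,k} + (b_0 n + b_1 k + b_2)T_{n-1,k-1} + (cd/λ)(n-k+1)T_{n-1,k-2}, with T_{0,0}=1 and T_{n,k}=0 unless 0 ≤ k ≤ n. Define A_{n,k} by A_{n,k} = (a_0 n + a_1 k + a_2)A_{n-1,k} + ([b_0 + d(a_1 - a_0)]n - (c + d a_1)k + b_2 + d(a_1 - a_2))A_{n-1,k-1}, with A_{0,0}=1 and A_{n,k}=0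 unless 0 ≤ k ≤ n. Then for all n, k ≥ 0, T_{n,k} = Σ_{i≥0} A_{n,i}·C(n-i, k-i)·λ^(n-k)·d^(k-i). -/
noncomputable def Pk (lam d : ℝ) (m : ℕ) (j : ℤ) : ℝ :=
  if 0 ≤ j ∧ j ≤ (m : ℤ) then (m.choose j.toNat : ℝ) * lam ^ (m - j.toNat) * d ^ j.toNat else 0

lemma Pk_neg (lam d : ℝ) (m : ℕ) (j : ℤ) (h : j < 0) : Pk lam d m j = 0 := by
  simp [Pk, not_le.mpr h]

lemma Pk_gt (lam d : ℝ) (m : ℕ) (j : ℤ) (h : (m : ℤ) < j) : Pk lam d m j = 0 := by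
  simp [Pk, not_le.mpr h]

lemma Pk_eq (lam d : ℝ) (m : ℕ) (j : ℤ) (h0 : 0 ≤ j) (h1 : j ≤ (m : ℤ)) :
    Pk lam d m j = (m.choose j.toNat : ℝ) * lam ^ (m - j.toNat) * d ^ j.toNat := by
  simp [Pk, h0, h1]

lemma Pk_zero (lam d : ℝ) (m : ℕ) : Pk lam d m 0 = lam ^ m := by
  simp [Pk]

lemma Pk_pascal (lam d : ℝ) (m : ℕ) (j : ℤ) :
    Pk lam d (m + 1) j = lam * Pk lam d m j + d * Pk lam d m (j - 1) := by
  rcases lt_or_ge j 0 with h | h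
  · rw [Pk_neg _ _ _ _ h, Pk_neg _ _ _ _ h, Pk_neg _ _ _ _ (by omega)]; ring
  rcases eq_or_lt_of_le h with rfl | h0
  · rw [Pk_zero, Pk_zero, Pk_neg _ _ _ _ (by omega)]
    rw [pow_succ]; ring
  rcases lt_or_ge (m : ℤ) j with h2 | h2
  · rcases eq_or_lt_of_le (by omega : (m : ℤ) + 1 ≤ j) with h3 | h3
    · rw [← h3]
      rw [Pk_eq _ _ _ _ (by omega) (by omega), Pk_gt _ _ _ _ (by omega),
        Pk_eq _ _ _ _ (by omega) (by omega)]
      have h4 : ((m : ℤ) + 1).toNat = m + 1 := by omega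
      have h5 : ((m : ℤ) + 1 - 1).toNat = m := by omega
      rw [h4, h5]
      simp [pow_succ]; ring
    · rw [Pk_gt _ _ _ _ (by omega), Pk_gt _ _ _ _ h2, Pk_gt _ _ _ _ (by omega)]; ring
  -- 1 ≤ j ≤ m
  rw [Pk_eq _ _ _ _ (by omega) (by omega), Pk_eq _ _ _ _ (by omega) (by omega),
    Pk_eq _ _ _ _ (by omega) (by omega)]
  set t := j.toNat with ht
  have ht1 : 1 ≤ t := by omega
  have htm : t ≤ m := by omega
  have hjt : (j - 1).toNat = t - 1 := by omega
  rw [hjt]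
  have hc : (m + 1).choose t = m.choose t + m.choose (t - 1) := by
    conv_lhs => rw [show t = (t - 1) + 1 by omega]
    rw [Nat.choose_succ_succ', show t - 1 + 1 = t by omega, Nat.add_comm]
  rw [hc]
  have e1 : m + 1 - t = (m - t) + 1 := by omega
  have e2 : m - (t - 1) = (m - t) + 1 := by omega
  rw [e1, e2]
  have ed : d ^ t = d ^ (t - 1) * d := by rw [← pow_succ]; congr 1; omega
  rw [ed, pow_succ]
  push_cast
  ring

lemma Pk_star (lam d : ℝ) (m : ℕ) (j : ℤ) :
    lam * (j : ℝ) * Pk lam d m j = d * ((m : ℝ) - (j : ℝ) + 1) * Pk lam d m (j - 1) := by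
  rcases lt_or_ge j 0 with h | h
  · rw [Pk_neg _ _ _ _ h, Pk_neg _ _ _ _ (by omega)]; ring
  rcases eq_or_lt_of_le h with rfl | h0
  · rw [show (0:ℤ) - 1 = -1 by norm_num, Pk_neg lam d m (-1) (by norm_num)]
    push_cast; ring
  rcases lt_or_ge (m : ℤ) j with h2 | h2
  · rcases eq_or_lt_of_le (by omega : (m : ℤ) + 1 ≤ j) with h3 | h3
    · rw [Pk_gt _ _ _ _ h2, ← h3]
      have hz : ((m : ℝ) - (((m : ℤ) + 1 : ℤ) : ℝ) + 1) = 0 := by push_cast; ring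
      rw [hz]; ring
    · rw [Pk_gt _ _ _ _ h2, Pk_gt _ _ _ _ (by omega)]; ring
  -- 1 ≤ j ≤ m
  rw [Pk_eq _ _ _ _ (by omega) (by omega), Pk_eq _ _ _ _ (by omega) (by omega)]
  set t := j.toNat with ht
  have ht1 : 1 ≤ t := by omega
  have htm : t ≤ m := by omega
  have hjt : (j - 1).toNat = t - 1 := by omega
  rw [hjt]
  have hc := Nat.choose_succ_right_eq m (t - 1)
  have e0 : t - 1 + 1 = t := by omega
  rw [e0] at hc
  have e2 : m - (t - 1) = (m - t) + 1 := by omega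
  rw [e2] at hc
  rw [e2]
  have hj : (j : ℝ) = (t : ℝ) := by
    have : (t : ℤ) = j := Int.toNat_of_nonneg h
    exact_mod_cast this.symm
  have hmt : ((m - t : ℕ) : ℝ) = (m : ℝ) - (t : ℝ) := by
    exact Nat.cast_sub htm
  have hcr : (m.choose t : ℝ) * t = (m.choose (t - 1) : ℝ) * ((m - t : ℕ) + 1) := by
    exact_mod_cast congrArg (Nat.cast : ℕ → ℝ) hc
  rw [hmt] at hcr
  rw [hj]
  have ed : d ^ t = d ^ (t - 1) * d := by rw [← pow_succ]; congr 1; omega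
  rw [ed, pow_succ]
  linear_combination (lam ^ (m - t) * lam * d ^ (t - 1) * d) * hcr

theorem transformation_entrywise
    (lam c b₁ a₀ a₁ a₂ b₀ b₂ d : ℝ)
    (hlam : 0 < lam) (hb₁ : b₁ = d * a₁ - c)
    (ha₀ : 0 ≤ a₀) (ha₁ : 0 ≤ a₁) (ha₂ : 0 ≤ a₂) (hb₀ : 0 ≤ b₀) (hb₂ : 0 ≤ b₂) (hd : 0 ≤ d)
    (T A : ℕ → ℤ → ℝ)
    (hT0 : T 0 0 = 1)
    (hTb : ∀ (n : ℕ) (k : ℤ), (k < 0 ∨ (n : ℤ) < k) → T n k = 0)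
    (hTrec : ∀ (n : ℕ) (k : ℤ),
      T (n + 1) k =
        lam * (a₀ * ((n : ℝ) + 1) + a₁ * (k : ℝ) + a₂) * T n k +
        (b₀ * ((n : ℝ) + 1) + b₁ * (k : ℝ) + b₂) * T n (k - 1) +
        (c * d / lam) * ((n : ℝ) + 1 - (k : ℝ) + 1) * T n (k - 2))
    (hA0 : A 0 0 = 1)
    (hAb : ∀ (n : ℕ) (k : ℤ), (k < 0 ∨ (n : ℤ) < k) → A n k = 0)
    (hArec : ∀ (n : ℕ) (k : ℤ),
      A (n + 1) k =
        (a₀ * ((n : ℝ) + 1) + a₁ * (k : ℝ) + a₂) * A n k +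
        ((b₀ + d * (a₁ - a₀)) * ((n : ℝ) + 1) - (c + d * a₁) * (k : ℝ) +
          b₂ + d * (a₁ - a₂)) * A n (k - 1)) :
    ∀ n k : ℕ, T n (k : ℤ) =
      ∑ i ∈ Finset.range (k + 1),
        A n (i : ℤ) * ((n - i).choose (k - i) : ℝ) * lam ^ (n - k) * d ^ (k - i) := by
  have hl : lam ≠ 0 := ne_of_gt hlam
  -- the key per-entry identity
  have key : ∀ (n i : ℕ) (k : ℤ), i ≤ n →
      (a₀ * ((n:ℝ)+1) + a₁ * (i:ℝ) + a₂) * Pk lam d (n+1-i) (k-i)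
      + ((b₀ + d*(a₁-a₀)) * ((n:ℝ)+1) - (c+d*a₁) * ((i:ℝ)+1) + b₂ + d*(a₁-a₂))
          * Pk lam d (n-i) (k-1-i)
      = lam * (a₀*((n:ℝ)+1)+a₁*(k:ℝ)+a₂) * Pk lam d (n-i) (k-i)
        + (b₀*((n:ℝ)+1)+b₁*(k:ℝ)+b₂) * Pk lam d (n-i) (k-1-i)
        + (c*d/lam) * ((n:ℝ)+1-(k:ℝ)+1) * Pk lam d (n-i) (k-2-i) := by
    intro n i k hi
    have hsub : n + 1 - i = (n - i) + 1 := by omega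
    rw [hsub, Pk_pascal]
    have e1 : k - 1 - (i:ℤ) = k - i - 1 := by ring
    have e2 : k - 2 - (i:ℤ) = k - i - 1 - 1 := by ring
    rw [e1, e2]
    have h1 := Pk_star lam d (n-i) (k-i)
    have h2 := Pk_star lam d (n-i) (k-i-1)
    rw [hb₁]
    push_cast [Nat.cast_sub hi] at h1 h2 ⊢
    field_simp
    linear_combination (-a₁ * lam) * h1 + c * h2
  -- main induction: T equals the Pk-convolution
  have main : ∀ (n : ℕ) (k : ℤ),
      T n k = ∑ i ∈ Finset.range (n+1), A n (i:ℤ) * Pk lam d (n - i) (k - i) := by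
    intro n
    induction n with
    | zero =>
      intro k
      rw [Finset.range_one, Finset.sum_singleton]
      rcases lt_trichotomy k 0 with h | h | h
      · rw [hTb 0 k (Or.inl h), Pk_neg lam d _ _ (by omega)]; ring
      · subst h; simp [hT0, hA0, Pk_zero]
      · rw [hTb 0 k (Or.inr (by exact_mod_cast h)), Pk_gt lam d _ _ (by simpa using h)]
        ring
    | succ n ih =>
      intro k
      rw [hTrec n k, ih k, ih (k-1), ih (k-2)]
      have hAA : ∀ i : ℕ,
          A (n+1) (i:ℤ) * Pk lam d (n+1-i) (k-i)
          = (a₀ * ((n:ℝ)+1) + a₁ * (i:ℝ) + a₂) * A n (i:ℤ) * Pk lam d (n+1-i) (k-i)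
            + ((b₀ + d*(a₁-a₀)) * ((n:ℝ)+1) - (c+d*a₁) * (i:ℝ) + b₂ + d*(a₁-a₂))
              * A n ((i:ℤ)-1) * Pk lam d (n+1-i) (k-i) := by
        intro i
        have h := hArec n (i:ℤ)
        push_cast at h ⊢
        rw [h]; ring
      rw [Finset.sum_congr rfl (fun i _ => hAA i), Finset.sum_add_distrib]
      -- first sum: drop the i = n+1 term
      have hs1 : ∑ i ∈ Finset.range (n+1+1),
            (a₀ * ((n:ℝ)+1) + a₁ * (i:ℝ) + a₂) * A n (i:ℤ) * Pk lam d (n+1-i) (k-i)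
          = ∑ i ∈ Finset.range (n+1),
            (a₀ * ((n:ℝ)+1) + a₁ * (i:ℝ) + a₂) * A n (i:ℤ) * Pk lam d (n+1-i) (k-i) := by
        rw [Finset.sum_range_succ, hAb n ((n+1 : ℕ) : ℤ) (Or.inr (by push_cast; omega))]
        ring
      -- second sum: shift index
      have hs2 : ∑ i ∈ Finset.range (n+1+1),
            ((b₀ + d*(a₁-a₀)) * ((n:ℝ)+1) - (c+d*a₁) * (i:ℝ) + b₂ + d*(a₁-a₂))
              * A n ((i:ℤ)-1) * Pk lam d (n+1-i) (k-i)
          = ∑ i ∈ Finset.range (n+1),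
            ((b₀ + d*(a₁-a₀)) * ((n:ℝ)+1) - (c+d*a₁) * ((i:ℝ)+1) + b₂ + d*(a₁-a₂))
              * A n (i:ℤ) * Pk lam d (n-i) (k-1-i) := by
        rw [Finset.sum_range_succ']
        rw [hAb n (((0:ℕ):ℤ)-1) (Or.inl (by norm_num))]
        have : ∀ i ∈ Finset.range (n+1),
            ((b₀ + d*(a₁-a₀)) * ((n:ℝ)+1) - (c+d*a₁) * ((i+1 : ℕ):ℝ) + b₂ + d*(a₁-a₂))
              * A n (((i+1:ℕ):ℤ)-1) * Pk lam d (n+1-(i+1)) (k-((i+1:ℕ):ℤ))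
            = ((b₀ + d*(a₁-a₀)) * ((n:ℝ)+1) - (c+d*a₁) * ((i:ℝ)+1) + b₂ + d*(a₁-a₂))
              * A n (i:ℤ) * Pk lam d (n-i) (k-1-i) := by
          intro i _
          have e3 : ((i+1:ℕ):ℤ) - 1 = (i:ℤ) := by push_cast; ring
          have e4 : n+1-(i+1) = n - i := by omega
          have e5 : k - ((i+1:ℕ):ℤ) = k - 1 - (i:ℤ) := by push_cast; ring
          rw [e3, e4, e5]
          push_cast
          ring
        rw [Finset.sum_congr rfl this]
        ring
      rw [hs1, hs2]
      rw [Finset.mul_sum, Finset.mul_sum, Finset.mul_sum,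
        ← Finset.sum_add_distrib, ← Finset.sum_add_distrib, ← Finset.sum_add_distrib]
      apply Finset.sum_congr rfl
      intro i hi
      have hin : i ≤ n := by
        have := Finset.mem_range.mp hi; omega
      have hk := key n i k hin
      linear_combination (-(A n (i:ℤ))) * hk
  -- convert to the stated form
  intro n k
  rw [main n (k:ℤ)]
  have hL : ∑ i ∈ Finset.range (n+1), A n (i:ℤ) * Pk lam d (n - i) ((k:ℤ) - i)
      = ∑ i ∈ Finset.range (min n k + 1), A n (i:ℤ) * Pk lam d (n - i) ((k:ℤ) - i) := by
    symm
    apply Finset.sum_subset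
    · intro x hx
      simp only [Finset.mem_range] at hx ⊢
      omega
    · intro x hx hxn
      simp only [Finset.mem_range] at hx hxn
      have hxk : k < x := by omega
      rw [Pk_neg lam d (n - x) ((k:ℤ) - (x:ℤ)) (by omega)]
      ring
  have hR : ∑ i ∈ Finset.range (k+1),
        A n (i : ℤ) * ((n - i).choose (k - i) : ℝ) * lam ^ (n - k) * d ^ (k - i)
      = ∑ i ∈ Finset.range (min n k + 1),
        A n (i : ℤ) * ((n - i).choose (k - i) : ℝ) * lam ^ (n - k) * d ^ (k - i) := by
    symm
    apply Finset.sum_subset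
    · intro x hx
      simp only [Finset.mem_range] at hx ⊢
      omega
    · intro x hx hxn
      simp only [Finset.mem_range] at hx hxn
      have hxk : n < x := by omega
      rw [hAb n (x:ℤ) (Or.inr (by exact_mod_cast hxk))]
      ring
  rw [hL, hR]
  apply Finset.sum_congr rfl
  intro i hi
  have him : i ≤ min n k := by
    have := Finset.mem_range.mp hi; omega
  have hin : i ≤ n := le_trans him (min_le_left _ _)
  have hik : i ≤ k := le_trans him (min_le_right _ _)
  rcases le_or_gt k n with hkn | hkn
  · -- k ≤ n : Pk term in range
    rw [Pk_eq lam d (n-i) ((k:ℤ)-i) (by omega) (by push_cast [Nat.cast_sub hin]; omega)]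
    have e1 : ((k:ℤ)-i).toNat = k - i := by omega
    have e2 : (n-i) - (k-i) = n - k := by omega
    rw [e1, e2]
    ring
  · -- n < k : both sides vanish
    rw [Pk_gt lam d (n-i) ((k:ℤ)-i) (by push_cast [Nat.cast_sub hin]; omega)]
    rw [Nat.choose_eq_zero_of_lt (by omega)]
    push_cast
    ring
end

section
/- Under the hypotheses of the transformation theorem (b_1 = d·a_1 - c), the row-generating functions T_n(x) = Σ_k T_{n,k} x^k and A_n(x) = Σ_k A_{n,k} x^k satisfy the polynomial identity T_n(x) = (λ + dx)^n · A_n(x/(λ + dx)), i.e., T_n(x) equals the polynomial obtained by substituting x/(λ+dx) into A_n and multiplying by (λ+dx)^n, for all n ≥ 0. -/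
open Polynomial

noncomputable def gcoef (lam d : ℝ) : ℕ → ℤ → ℝ
  | 0, i => if i = 0 then 1 else 0
  | (j+1), i => lam * gcoef lam d j i + d * gcoef lam d j (i-1)

lemma gcoef_succ (lam d : ℝ) (j : ℕ) (i : ℤ) :
    gcoef lam d (j+1) i = lam * gcoef lam d j i + d * gcoef lam d j (i-1) := rfl

lemma gcoef_zero (lam d : ℝ) (i : ℤ) : gcoef lam d 0 i = if i = 0 then 1 else 0 := rfl

lemma gcoef_neg (lam d : ℝ) : ∀ (j : ℕ) (i : ℤ), i < 0 → gcoef lam d j i = 0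
  | 0, i, h => by rw [gcoef_zero, if_neg (by omega)]
  | (j+1), i, h => by
      rw [gcoef_succ, gcoef_neg lam d j i h, gcoef_neg lam d j (i-1) (by omega)]
      ring

lemma gcoef_zmul (lam d : ℝ) (i : ℤ) : (i : ℝ) * gcoef lam d 0 i = 0 := by
  rcases eq_or_ne i 0 with h | h <;> simp [gcoef_zero, h]

lemma gcoef_L2succ (lam d : ℝ) : ∀ (j : ℕ) (i : ℤ),
    (i : ℝ) * gcoef lam d (j+1) i = d * ((j : ℝ) + 1) * gcoef lam d j (i-1)
  | 0, i => by
      rw [gcoef_succ]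
      rcases eq_or_ne i 0 with h | h
      · subst h; norm_num [gcoef_zero]
      · rcases eq_or_ne i 1 with h1 | h1
        · subst h1; norm_num [gcoef_zero]
        · simp only [gcoef_zero, if_neg h, if_neg (show ¬ i - 1 = 0 by omega)]
          ring
  | (j+1), i => by
      have h1 := gcoef_L2succ lam d j i
      have h2 := gcoef_L2succ lam d j (i-1)
      have h3 := gcoef_succ lam d j (i-1)
      have h4 := gcoef_succ lam d (j+1) i
      push_cast at h1 h2 ⊢
      linear_combination (i:ℝ) * h4 + lam * h1 + d * h2 - d * ((j:ℝ)+1) * h3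

lemma gcoef_L3succ (lam d : ℝ) : ∀ (j : ℕ) (i : ℤ),
    (((j : ℝ) + 1) - (i : ℝ)) * gcoef lam d (j+1) i = lam * ((j : ℝ) + 1) * gcoef lam d j i
  | 0, i => by
      rw [gcoef_succ]
      rcases eq_or_ne i 0 with h | h
      · subst h; norm_num [gcoef_zero]
      · rcases eq_or_ne i 1 with h1 | h1
        · subst h1; norm_num [gcoef_zero]
        · simp only [gcoef_zero, if_neg h, if_neg (show ¬ i - 1 = 0 by omega)]
          ring
  | (j+1), i => by
      have h1 := gcoef_L3succ lam d j i
      have h2 := gcoef_L3succ lam d j (i-1)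
      have h3 := gcoef_succ lam d j i
      have h4 := gcoef_succ lam d (j+1) i
      push_cast at h1 h2 ⊢
      linear_combination ((j:ℝ) + 2 - (i:ℝ)) * h4 + lam * h1 + d * h2 - lam * ((j:ℝ)+1) * h3

lemma gcoef_L2 (lam d : ℝ) (j : ℕ) (i : ℤ) :
    (i : ℝ) * gcoef lam d j i = d * (j : ℝ) * gcoef lam d (j - 1) (i - 1) := by
  cases j with
  | zero =>
      have h := gcoef_zmul lam d i
      push_cast
      linear_combination h
  | succ j =>
      have h := gcoef_L2succ lam d j i
      push_cast
      simpa using h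

lemma gcoef_L3 (lam d : ℝ) (j : ℕ) (i : ℤ) :
    ((j : ℝ) - (i : ℝ)) * gcoef lam d j i = lam * (j : ℝ) * gcoef lam d (j - 1) i := by
  cases j with
  | zero =>
      have h := gcoef_zmul lam d i
      push_cast
      linear_combination -h
  | succ j =>
      have h := gcoef_L3succ lam d j i
      push_cast
      simpa using h

lemma coeff_L_pow (lam d : ℝ) : ∀ (j m : ℕ),
    ((C lam + C d * X : ℝ[X]) ^ j).coeff m = gcoef lam d j (m : ℤ)
  | 0, m => by
      rcases eq_or_ne m 0 with h | h
      · subst h; simp [gcoef_zero]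
      · rw [pow_zero, Polynomial.coeff_one, if_neg h, gcoef_zero,
          if_neg (by exact_mod_cast h)]
  | (j+1), m => by
      have ih := coeff_L_pow lam d j
      rw [pow_succ]
      rw [show ((C lam + C d * X : ℝ[X]) ^ j) * (C lam + C d * X)
          = C lam * (C lam + C d * X) ^ j + C d * ((C lam + C d * X) ^ j * X) from by ring]
      rw [Polynomial.coeff_add, Polynomial.coeff_C_mul, Polynomial.coeff_C_mul, ih]
      cases m with
      | zero =>
          rw [Polynomial.mul_coeff_zero, Polynomial.coeff_X_zero, gcoef_succ,
            gcoef_neg lam d j (((0:ℕ):ℤ) - 1) (by norm_num)]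
          ring
      | succ s =>
          rw [Polynomial.coeff_mul_X, ih, gcoef_succ,
            show (((s+1:ℕ)):ℤ) - 1 = ((s:ℕ):ℤ) from by push_cast; ring]

theorem transformation_row_generating_functions
    (lam c b₁ a₀ a₁ a₂ b₀ b₂ d : ℝ)
    (hlam : 0 < lam) (hb₁ : b₁ = d * a₁ - c)
    (ha₀ : 0 ≤ a₀) (ha₁ : 0 ≤ a₁) (ha₂ : 0 ≤ a₂) (hb₀ : 0 ≤ b₀) (hb₂ : 0 ≤ b₂) (hd : 0 ≤ d)
    (T A : ℕ → ℤ → ℝ)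
    (hT0 : T 0 0 = 1)
    (hTb : ∀ (n : ℕ) (k : ℤ), (k < 0 ∨ (n : ℤ) < k) → T n k = 0)
    (hTrec : ∀ (n : ℕ) (k : ℤ),
      T (n + 1) k =
        lam * (a₀ * ((n : ℝ) + 1) + a₁ * (k : ℝ) + a₂) * T n k +
        (b₀ * ((n : ℝ) + 1) + b₁ * (k : ℝ) + b₂) * T n (k - 1) +
        (c * d / lam) * ((n : ℝ) + 1 - (k : ℝ) + 1) * T n (k - 2))
    (hA0 : A 0 0 = 1)
    (hAb : ∀ (n : ℕ) (k : ℤ), (k < 0 ∨ (n : ℤ) < k) → A n k = 0)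
    (hArec : ∀ (n : ℕ) (k : ℤ),
      A (n + 1) k =
        (a₀ * ((n : ℝ) + 1) + a₁ * (k : ℝ) + a₂) * A n k +
        ((b₀ + d * (a₁ - a₀)) * ((n : ℝ) + 1) - (c + d * a₁) * (k : ℝ) +
          b₂ + d * (a₁ - a₂)) * A n (k - 1)) :
    ∀ n : ℕ,
      (∑ k ∈ Finset.range (n + 1), C (T n (k : ℤ)) * X ^ k) =
        ∑ k ∈ Finset.range (n + 1),
          C (A n (k : ℤ)) * X ^ k * (C lam + C d * X) ^ (n - k) := by
  subst hb₁
  have hl : lam ≠ 0 := ne_of_gt hlam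
  have key : ∀ n : ℕ, ∀ m : ℤ,
      T n m = ∑ k ∈ Finset.range (n+1), A n (k:ℤ) * gcoef lam d (n - k) (m - (k:ℤ)) := by
    intro n
    induction n with
    | zero =>
        intro m
        rw [Finset.sum_range_one]
        rcases eq_or_ne m 0 with h | h
        · subst h; simp [hT0, hA0, gcoef_zero]
        · rw [hTb 0 m (by omega)]
          simp [gcoef_zero, h]
    | succ n ih =>
        intro m
        rw [hTrec n m, ih m, ih (m-1), ih (m-2)]
        have t1 : A n (((n+1:ℕ)):ℤ) = 0 := hAb n _ (Or.inr (by exact_mod_cast Nat.lt_succ_self n))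
        have t0 : A n ((((0:ℕ)):ℤ) - 1) = 0 := hAb n _ (Or.inl (by norm_num))
        have hRHS : (∑ k ∈ Finset.range (n+1+1), A (n+1) (k:ℤ) * gcoef lam d (n+1-k) (m-(k:ℤ)))
            = ∑ k ∈ Finset.range (n+1), A n (k:ℤ) *
                (lam * (a₀*((n:ℝ)+1)+a₁*(k:ℝ)+a₂) * gcoef lam d (n-k) (m-(k:ℤ)) +
                 (d * (a₀*((n:ℝ)+1)+a₁*(k:ℝ)+a₂) +
                  ((b₀+d*(a₁-a₀))*((n:ℝ)+1) - (c+d*a₁)*((k:ℝ)+1) + (b₂ + d*(a₁-a₂)))) *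
                   gcoef lam d (n-k) (m-(k:ℤ)-1)) := by
          calc
            (∑ k ∈ Finset.range (n+1+1), A (n+1) (k:ℤ) * gcoef lam d (n+1-k) (m-(k:ℤ)))
              = ∑ k ∈ Finset.range (n+1+1),
                  ((a₀*((n:ℝ)+1)+a₁*(k:ℝ)+a₂) * A n (k:ℤ) * gcoef lam d (n+1-k) (m-(k:ℤ))
                   + ((b₀+d*(a₁-a₀))*((n:ℝ)+1) - (c+d*a₁)*(k:ℝ) + (b₂ + d*(a₁-a₂)))
                      * A n ((k:ℤ)-1) * gcoef lam d (n+1-k) (m-(k:ℤ))) := by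
                refine Finset.sum_congr rfl fun k _ => ?_
                rw [hArec n (k:ℤ)]
                push_cast
                ring
            _ = (∑ k ∈ Finset.range (n+1+1),
                  (a₀*((n:ℝ)+1)+a₁*(k:ℝ)+a₂) * A n (k:ℤ) * gcoef lam d (n+1-k) (m-(k:ℤ)))
                + ∑ k ∈ Finset.range (n+1+1),
                  ((b₀+d*(a₁-a₀))*((n:ℝ)+1) - (c+d*a₁)*(k:ℝ) + (b₂ + d*(a₁-a₂)))
                      * A n ((k:ℤ)-1) * gcoef lam d (n+1-k) (m-(k:ℤ)) :=
                Finset.sum_add_distrib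
            _ = (∑ k ∈ Finset.range (n+1),
                  (a₀*((n:ℝ)+1)+a₁*(k:ℝ)+a₂) * A n (k:ℤ) * gcoef lam d (n+1-k) (m-(k:ℤ)))
                + ∑ k ∈ Finset.range (n+1),
                  ((b₀+d*(a₁-a₀))*((n:ℝ)+1) - (c+d*a₁)*(((k+1:ℕ)):ℝ) + (b₂ + d*(a₁-a₂)))
                      * A n ((((k+1:ℕ)):ℤ)-1) * gcoef lam d (n+1-(k+1)) (m-(((k+1:ℕ)):ℤ)) := by
                rw [Finset.sum_range_succ, Finset.sum_range_succ' _ (n+1)]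
                rw [t1, t0]
                simp only [mul_zero, zero_mul, add_zero, zero_add]
            _ = _ := by
                rw [← Finset.sum_add_distrib]
                refine Finset.sum_congr rfl fun k hk => ?_
                have hk' : k ≤ n := Finset.mem_range_succ_iff.mp hk
                have c1 : n+1-k = (n-k)+1 := by omega
                have c2 : ((((k+1:ℕ)):ℤ)-1) = (k:ℤ) := by push_cast; ring
                have c3 : n+1-(k+1) = n-k := by omega
                have c4 : m - (((k+1:ℕ)):ℤ) = m - (k:ℤ) - 1 := by push_cast; ring
                rw [c1, gcoef_succ, c2, c3, c4]
                push_cast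
                ring
        rw [hRHS, Finset.mul_sum, Finset.mul_sum, Finset.mul_sum,
          ← Finset.sum_add_distrib, ← Finset.sum_add_distrib]
        refine Finset.sum_congr rfl fun k hk => ?_
        have hk' : k ≤ n := Finset.mem_range_succ_iff.mp hk
        rw [show m - 1 - (k:ℤ) = m - (k:ℤ) - 1 from by ring,
            show m - 2 - (k:ℤ) = m - (k:ℤ) - 2 from by ring]
        have h2a := gcoef_L2 lam d (n-k) (m - (k:ℤ))
        have h2b := gcoef_L2 lam d (n-k) (m - (k:ℤ) - 1)
        have h3a := gcoef_L3 lam d (n-k) (m - (k:ℤ) - 1)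
        have h3b := gcoef_L3 lam d (n-k) (m - (k:ℤ) - 2)
        rw [show m - (k:ℤ) - 1 - 1 = m - (k:ℤ) - 2 from by ring] at h2b
        have hnk : ((n-k:ℕ):ℝ) = (n:ℝ) - (k:ℝ) := by
          push_cast [Nat.cast_sub hk']
          ring
        push_cast [hnk] at h2a h2b h3a h3b
        have h3b' : c * d / lam * (lam * ((n:ℝ) - (k:ℝ)) * gcoef lam d (n-k-1) (m-(k:ℤ)-2))
            = c * d * ((n:ℝ) - (k:ℝ)) * gcoef lam d (n-k-1) (m-(k:ℤ)-2) := by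
          field_simp
        linear_combination (A n (k:ℤ)) *
          (lam * a₁ * h2a - d * a₁ * h3a - c * h2b + c * d / lam * h3b + h3b')
  intro n
  apply Polynomial.ext
  intro m
  rw [Polynomial.finset_sum_coeff, Polynomial.finset_sum_coeff]
  have hc : ∀ k : ℕ, (C (A n (k:ℤ)) * X^k * (C lam + C d*X)^(n-k)).coeff m
      = A n (k:ℤ) * gcoef lam d (n-k) ((m:ℤ) - (k:ℤ)) := by
    intro k
    rw [show C (A n (k:ℤ)) * X^k * (C lam + C d*X)^(n-k)
        = C (A n (k:ℤ)) * (C lam + C d*X)^(n-k) * X^k from by ring,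
      Polynomial.coeff_mul_X_pow']
    split_ifs with h
    · rw [Polynomial.coeff_C_mul, coeff_L_pow,
        show ((m-k:ℕ):ℤ) = (m:ℤ) - (k:ℤ) from by omega]
    · rw [gcoef_neg lam d _ _ (by omega)]
      simp
  have hL : (∑ k ∈ Finset.range (n+1), (C (T n (k:ℤ)) * X ^ k).coeff m) = T n (m:ℤ) := by
    simp only [Polynomial.coeff_C_mul, Polynomial.coeff_X_pow, mul_ite, mul_one, mul_zero]
    rw [Finset.sum_ite_eq (Finset.range (n+1)) m (fun k => T n (k:ℤ))]
    split_ifs with h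
    · rfl
    · rw [Finset.mem_range, not_lt] at h
      exact (hTb n m (Or.inr (by exact_mod_cast h))).symm
  rw [hL]
  calc T n (m:ℤ) = ∑ k ∈ Finset.range (n+1), A n (k:ℤ) * gcoef lam d (n - k) ((m:ℤ) - (k:ℤ)) :=
        key n (m:ℤ)
    _ = _ := by
        refine Finset.sum_congr rfl fun k _ => (hc k).symm
end

section
/- Let a_1, a_2 > 0 and c > 0, and let E_{n,k} satisfy E_{n,k} = (a_1 k + a_2)E_{n-1,k} + (a_1 n - a_1 k + a_2)E_{n-1,k-1} with E_{0,0}=1 and E_{n,k}=0 unless 0 ≤ k ≤ n. Let S_{n,k} satisfy S_{n,k} = (a_1 k + a_2)S_{n-1,k} + c(n - 2k + 1)S_{n-1,k-1} with S_{0,0}=1 and S_{n,k}=0 unless 0 ≤ k ≤ (n+1)/2. Then for all n ≥ 1, the row-generating functions satisfy E_n(x) = (1+x)^n · S_n((2a_1/c)·x/(1+x)^2) as an identity of polynomials (equivalently, of rational functions). -/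
open Polynomial

lemma term_id (a₁ a₂ s : ℝ) (k m : ℕ) :
    C a₂ * (C s * X ^ k * (1 + X) ^ m)
      + C (a₁ * (2 * k + m) + a₂) * (X * (C s * X ^ k * (1 + X) ^ m))
      + C a₁ * ((X - X ^ 2) * derivative (C s * X ^ k * (1 + X) ^ m))
    = C ((a₁ * k + a₂) * s) * X ^ k * (1 + X) ^ (m + 1)
      + C (2 * a₁ * m * s) * X ^ (k + 1) * (1 + X) ^ (m - 1) := by
  have hd : derivative ((1 : ℝ[X]) + X) = 1 := by simp
  rcases k with _ | k <;> rcases m with _ | m <;>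
    simp only [derivative_mul, derivative_C, derivative_X_pow, derivative_one, derivative_X, derivative_pow,
      hd, Nat.cast_zero, Nat.cast_succ, Nat.add_sub_cancel, pow_zero, Nat.zero_sub,
      Nat.succ_sub_one, map_add, map_mul, map_ofNat, C_0, C_1] <;>
    push_cast <;> ring


lemma perE (a₁ a₂ e nn : ℝ) (k : ℕ) :
    C ((a₁ * k + a₂) * e) * X ^ k + C ((a₁ * (nn + 1) - a₁ * (k + 1) + a₂) * e) * X ^ (k + 1)
      = C a₂ * (C e * X ^ k) + C (a₁ * nn + a₂) * (X * (C e * X ^ k))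
        + C a₁ * ((X - X ^ 2) * (C (e * k) * X ^ (k - 1))) := by
  rcases k with _ | k <;>
    simp only [Nat.cast_zero, Nat.cast_succ, mul_zero, map_zero, zero_mul, mul_zero,
      Nat.add_sub_cancel, Nat.zero_sub, pow_zero, map_add, map_mul, map_sub] <;>
    push_cast <;> ring

lemma Eside (a₁ a₂ : ℝ) (E : ℕ → ℤ → ℝ)
    (hEb : ∀ (n : ℕ) (k : ℤ), (k < 0 ∨ (n : ℤ) < k) → E n k = 0)
    (hErec : ∀ (n : ℕ) (k : ℤ),
      E (n + 1) k =
        (a₁ * (k : ℝ) + a₂) * E n k +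
        (a₁ * ((n : ℝ) + 1) - a₁ * (k : ℝ) + a₂) * E n (k - 1)) (n : ℕ) :
    ∑ k ∈ Finset.range (n + 2), C (E (n + 1) (k : ℤ)) * X ^ k
      = C a₂ * (∑ k ∈ Finset.range (n + 1), C (E n (k : ℤ)) * X ^ k)
        + C (a₁ * n + a₂) * (X * ∑ k ∈ Finset.range (n + 1), C (E n (k : ℤ)) * X ^ k)
        + C a₁ * ((X - X ^ 2) *
            derivative (∑ k ∈ Finset.range (n + 1), C (E n (k : ℤ)) * X ^ k)) := by
  have hsplit : ∑ k ∈ Finset.range (n + 2), C (E (n + 1) (k : ℤ)) * X ^ k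
      = (∑ k ∈ Finset.range (n + 2), C ((a₁ * k + a₂) * E n (k : ℤ)) * X ^ k)
        + ∑ k ∈ Finset.range (n + 2),
            C ((a₁ * ((n : ℝ) + 1) - a₁ * k + a₂) * E n ((k : ℤ) - 1)) * X ^ k := by
    rw [← Finset.sum_add_distrib]
    refine Finset.sum_congr rfl fun k _ => ?_
    rw [hErec]
    push_cast
    rw [C_add, add_mul]
  rw [hsplit]
  -- first sum: drop top term
  rw [Finset.sum_range_succ (fun k => C ((a₁ * k + a₂) * E n (k : ℤ)) * X ^ k)]
  have hEtop : E n ((n : ℤ) + 1) = 0 := hEb n _ (Or.inr (by omega))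
  -- second sum: drop bottom term and shift
  rw [Finset.sum_range_succ' (fun k => C ((a₁ * ((n : ℝ) + 1) - a₁ * k + a₂) * E n ((k : ℤ) - 1)) * X ^ k) (n + 1)]
  have hEneg : E n (-1) = 0 := hEb n _ (Or.inl (by omega))
  simp only [Nat.cast_add, Nat.cast_one, Nat.cast_zero, Int.cast_zero, zero_sub, hEneg, hEtop,
    mul_zero, map_zero, zero_mul, add_zero, pow_zero, mul_one]
  simp only [derivative_sum, derivative_C_mul_X_pow, Finset.mul_sum, ← Finset.sum_add_distrib]
  refine Finset.sum_congr rfl fun k hk => ?_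
  have : ((k : ℤ) + 1 - 1) = (k : ℤ) := by ring
  rw [this]
  push_cast
  exact perE a₁ a₂ (E n (k : ℤ)) (n : ℝ) k

lemma Sside (a₁ a₂ c t : ℝ) (hct : c * t = 2 * a₁) (S : ℕ → ℤ → ℝ)
    (hSz : ∀ (n : ℕ) (k : ℤ), ((n : ℤ) < 2 * k) → S n k = 0)
    (hSneg : ∀ (n : ℕ) (k : ℤ), k < 0 → S n k = 0)
    (hSrec : ∀ (n : ℕ) (k : ℤ),
      S (n + 1) k =
        (a₁ * (k : ℝ) + a₂) * S n k +
        c * ((n : ℝ) + 1 - 2 * (k : ℝ) + 1) * S n (k - 1)) (n : ℕ) :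
    ∑ j ∈ Finset.range ((n + 1) / 2 + 1),
        C (S (n + 1) (j : ℤ)) * C t ^ j * X ^ j * (1 + X) ^ (n + 1 - 2 * j)
      = C a₂ * (∑ k ∈ Finset.range (n / 2 + 1),
            C (S n (k : ℤ)) * C t ^ k * X ^ k * (1 + X) ^ (n - 2 * k))
        + C (a₁ * n + a₂) * (X * ∑ k ∈ Finset.range (n / 2 + 1),
            C (S n (k : ℤ)) * C t ^ k * X ^ k * (1 + X) ^ (n - 2 * k))
        + C a₁ * ((X - X ^ 2) * derivative (∑ k ∈ Finset.range (n / 2 + 1),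
            C (S n (k : ℤ)) * C t ^ k * X ^ k * (1 + X) ^ (n - 2 * k))) := by
  -- canonical extended forms
  set A : ℕ → ℝ[X] := fun k =>
    C ((a₁ * k + a₂) * (S n (k : ℤ) * t ^ k)) * X ^ k * (1 + X) ^ (n + 1 - 2 * k) with hA
  set B : ℕ → ℝ[X] := fun k =>
    C (2 * a₁ * ((n : ℕ) - 2 * k : ℕ) * (S n (k : ℤ) * t ^ k)) * X ^ (k + 1)
      * (1 + X) ^ (n + 1 - 2 * (k + 1)) with hB
  -- Step 1: RHS = ∑_{k ∈ range (n/2+1)} (A k + B k)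
  have hRHS : C a₂ * (∑ k ∈ Finset.range (n / 2 + 1),
            C (S n (k : ℤ)) * C t ^ k * X ^ k * (1 + X) ^ (n - 2 * k))
        + C (a₁ * n + a₂) * (X * ∑ k ∈ Finset.range (n / 2 + 1),
            C (S n (k : ℤ)) * C t ^ k * X ^ k * (1 + X) ^ (n - 2 * k))
        + C a₁ * ((X - X ^ 2) * derivative (∑ k ∈ Finset.range (n / 2 + 1),
            C (S n (k : ℤ)) * C t ^ k * X ^ k * (1 + X) ^ (n - 2 * k)))
      = ∑ k ∈ Finset.range (n / 2 + 1), (A k + B k) := by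
    simp only [derivative_sum, Finset.mul_sum, ← Finset.sum_add_distrib]
    refine Finset.sum_congr rfl fun k hk => ?_
    have hkn : 2 * k ≤ n := by
      have := Finset.mem_range.mp hk; omega
    set m := n - 2 * k with hm
    have h1 : n - 2 * k = m := rfl
    have h2 : n + 1 - 2 * k = m + 1 := by omega
    have h3 : n + 1 - 2 * (k + 1) = m - 1 := by omega
    have h4 : (n : ℝ) = 2 * (k : ℝ) + (m : ℝ) := by
      exact_mod_cast congrArg (Nat.cast : ℕ → ℝ) (by omega : n = 2 * k + m)
    have hterm : C (S n (k : ℤ)) * C t ^ k * X ^ k * (1 + X) ^ (n - 2 * k)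
        = C (S n (k : ℤ) * t ^ k) * X ^ k * (1 + X) ^ m := by
      rw [h1, C_mul, C_pow]
    rw [hterm]
    simp only [hA, hB, h2, h3]
    have := term_id a₁ a₂ (S n (k : ℤ) * t ^ k) k m
    rw [← this, h4]
  rw [hRHS]
  -- Step 2: extend RHS sum to range (n + 2)
  have hext : ∑ k ∈ Finset.range (n / 2 + 1), (A k + B k)
      = ∑ k ∈ Finset.range (n + 2), (A k + B k) := by
    refine Finset.sum_subset (Finset.range_subset_range.mpr (by omega)) fun k _ hk => ?_
    have hk' : n / 2 + 1 ≤ k := by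
      by_contra h; exact hk (Finset.mem_range.mpr (by omega))
    have hz : S n (k : ℤ) = 0 := hSz n k (by omega)
    simp [hA, hB, hz]
  rw [hext]
  -- Step 3: expand LHS via hSrec and extend to range (n + 2)
  have hLext : ∑ j ∈ Finset.range ((n + 1) / 2 + 1),
        C (S (n + 1) (j : ℤ)) * C t ^ j * X ^ j * (1 + X) ^ (n + 1 - 2 * j)
      = ∑ j ∈ Finset.range (n + 2),
        C (S (n + 1) (j : ℤ)) * C t ^ j * X ^ j * (1 + X) ^ (n + 1 - 2 * j) := by
    refine Finset.sum_subset (Finset.range_subset_range.mpr (by omega)) fun j _ hj => ?_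
    have hj' : (n + 1) / 2 + 1 ≤ j := by
      by_contra h; exact hj (Finset.mem_range.mpr (by omega))
    have hz : S (n + 1) (j : ℤ) = 0 := hSz (n + 1) j (by omega)
    simp [hz]
  rw [hLext]
  have hsplit : ∀ j : ℕ, C (S (n + 1) (j : ℤ)) * C t ^ j * X ^ j * (1 + X) ^ (n + 1 - 2 * j)
      = (C ((a₁ * j + a₂) * S n (j : ℤ)) * C t ^ j * X ^ j * (1 + X) ^ (n + 1 - 2 * j))
        + C (c * ((n : ℝ) + 1 - 2 * j + 1) * S n ((j : ℤ) - 1)) * C t ^ j * X ^ j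
            * (1 + X) ^ (n + 1 - 2 * j) := by
    intro j
    rw [hSrec]
    push_cast
    rw [C_add]
    ring
  simp only [hsplit]
  rw [Finset.sum_add_distrib, Finset.sum_add_distrib]
  congr 1
  · -- A-part, elementwise
    refine Finset.sum_congr rfl fun j _ => ?_
    simp only [hA, C_mul, C_pow, C_add]
    ring
  · -- B-part: shift index
    rw [Finset.sum_range_succ' _ (n + 1)]
    have hneg : S n ((0 : ℤ) - 1) = 0 := hSneg n _ (by omega)
    rw [Finset.sum_range_succ (fun k => B k) (n + 1)]
    have hBtop : B (n + 1) = 0 := by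
      have hz : S n ((n : ℤ) + 1) = 0 := hSz n _ (by omega)
      simp only [hB]
      rw [show (((n + 1 : ℕ)) : ℤ) = (n : ℤ) + 1 by push_cast; ring, hz]
      simp
    rw [hBtop, add_zero]
    simp only [Nat.cast_zero, hneg, mul_zero, zero_mul, map_zero, add_zero, zero_add]
    refine Finset.sum_congr rfl fun i hi => ?_
    have h5 : ((i + 1 : ℕ) : ℤ) - 1 = (i : ℤ) := by push_cast; ring
    rw [hB, h5]
    by_cases hle : 2 * i ≤ n
    · have hcast : ((n - 2 * i : ℕ) : ℝ) = (n : ℝ) - 2 * i := by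
        push_cast [Nat.cast_sub hle]; ring
      simp only [hcast, ← C_pow, ← C_mul]
      push_cast
      congr 2
      have h6 : c * ((n : ℝ) + 1 - 2 * ((i : ℝ) + 1) + 1) * S n (i : ℤ) * t ^ (i + 1)
          = (c * t) * (((n : ℝ) - 2 * i) * (S n (i : ℤ) * t ^ i)) := by ring
      rw [h6, hct]
      ring
    · have hz : S n (i : ℤ) = 0 := hSz n i (by omega)
      simp [hz]

lemma Szero (a₁ a₂ c : ℝ) (S : ℕ → ℤ → ℝ)
    (hSb : ∀ (n : ℕ) (k : ℤ), (k < 0 ∨ (n : ℤ) + 1 < 2 * k) → S n k = 0)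
    (hSrec : ∀ (n : ℕ) (k : ℤ),
      S (n + 1) k =
        (a₁ * (k : ℝ) + a₂) * S n k +
        c * ((n : ℝ) + 1 - 2 * (k : ℝ) + 1) * S n (k - 1)) :
    ∀ (n : ℕ) (k : ℤ), (n : ℤ) < 2 * k → S n k = 0 := by
  intro n k hk
  rcases lt_or_eq_of_le (by omega : (n : ℤ) + 1 ≤ 2 * k) with h | h
  · exact hSb n k (Or.inr h)
  · cases n with
    | zero => omega
    | succ m =>
      rw [hSrec]
      have h1 : S m k = 0 := hSb m k (Or.inr (by omega))
      have h2 : ((m : ℝ) + 1 - 2 * (k : ℝ) + 1) = 0 := by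
        have : 2 * k = (m : ℤ) + 2 := by omega
        have := congrArg (Int.cast : ℤ → ℝ) this
        push_cast at this
        linarith
      rw [h1, h2]
      ring

theorem generalized_eulerian_gamma_decomposition
    (a₁ a₂ c : ℝ) (ha₁ : 0 < a₁) (ha₂ : 0 < a₂) (hc : 0 < c)
    (E S : ℕ → ℤ → ℝ)
    (hE0 : E 0 0 = 1)
    (hEb : ∀ (n : ℕ) (k : ℤ), (k < 0 ∨ (n : ℤ) < k) → E n k = 0)
    (hErec : ∀ (n : ℕ) (k : ℤ),
      E (n + 1) k =
        (a₁ * (k : ℝ) + a₂) * E n k +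
        (a₁ * ((n : ℝ) + 1) - a₁ * (k : ℝ) + a₂) * E n (k - 1))
    (hS0 : S 0 0 = 1)
    (hSb : ∀ (n : ℕ) (k : ℤ), (k < 0 ∨ (n : ℤ) + 1 < 2 * k) → S n k = 0)
    (hSrec : ∀ (n : ℕ) (k : ℤ),
      S (n + 1) k =
        (a₁ * (k : ℝ) + a₂) * S n k +
        c * ((n : ℝ) + 1 - 2 * (k : ℝ) + 1) * S n (k - 1)) :
    ∀ n : ℕ, 1 ≤ n →
      (∑ k ∈ Finset.range (n + 1), C (E n (k : ℤ)) * X ^ k) =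
        ∑ k ∈ Finset.range (n / 2 + 1),
          C (S n (k : ℤ)) * C (2 * a₁ / c) ^ k * X ^ k * (1 + X) ^ (n - 2 * k) := by
  have hct : c * (2 * a₁ / c) = 2 * a₁ := by field_simp
  have hSz := Szero a₁ a₂ c S hSb hSrec
  have hSneg : ∀ (n : ℕ) (k : ℤ), k < 0 → S n k = 0 := fun n k hk => hSb n k (Or.inl hk)
  have key : ∀ n : ℕ,
      (∑ k ∈ Finset.range (n + 1), C (E n (k : ℤ)) * X ^ k) =
        ∑ k ∈ Finset.range (n / 2 + 1),
          C (S n (k : ℤ)) * C (2 * a₁ / c) ^ k * X ^ k * (1 + X) ^ (n - 2 * k) := by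
    intro n
    induction n with
    | zero => simp [hE0, hS0]
    | succ n ih =>
      have hE := Eside a₁ a₂ E hEb hErec n
      have hS := Sside a₁ a₂ c (2 * a₁ / c) hct S hSz hSneg hSrec n
      rw [show n + 1 + 1 = n + 2 from rfl, hE, hS, ih]
  exact fun n _ => key n
end

section
/- Let a, b, c > 0 and let S_{n,k} satisfy S_{n,k} = (a·k + b)S_{n-1,k} + c(n - 2k + 1)S_{n-1,k-1} with S_{0,0}=1 and S_{n,k}=0 unless 0 ≤ k ≤ (n+1)/2. Let Q_n(δ,t) be the general derivative polynomial with δ = 2b/a. Then for all n ≥ 0 and all q > 1 (with (2c/a)q - 1 > 0), the row-generating function satisfies S_n(q) = (a/2)^n·((2c/a)q - 1)^(n/2)·Q_n(2b/a, 1/√((2c/a)q - 1)). -/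
open Polynomial

/-- The general derivative polynomials `Q_n(δ, t)`:
`Q_0 = 1`, `Q_{n+1} = (1 + t²)·Q_n' + δ·t·Q_n`. -/
noncomputable def Qpoly (δ : ℝ) : ℕ → ℝ[X]
  | 0 => 1
  | n + 1 => (1 + X ^ 2) * derivative (Qpoly δ n) + C δ * X * Qpoly δ n

noncomputable def Ppoly (δ : ℝ) : ℕ → ℝ[X]
  | 0 => 1
  | n + 1 => -2 * (X * (X + 1)) * derivative (Ppoly δ n)
      + (C δ + C (n : ℝ) * (X + 1)) * Ppoly δ n

lemma sum_eq_Ppoly (a b c : ℝ) (ha : a ≠ 0)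
    (S : ℕ → ℤ → ℝ)
    (hS0 : S 0 0 = 1)
    (hSb : ∀ (n : ℕ) (k : ℤ), (k < 0 ∨ (n : ℤ) + 1 < 2 * k) → S n k = 0)
    (hSrec : ∀ (n : ℕ) (k : ℤ),
      S (n + 1) k =
        (a * (k : ℝ) + b) * S n k +
        c * ((n : ℝ) + 1 - 2 * (k : ℝ) + 1) * S n (k - 1)) :
    ∀ n : ℕ, ∀ q : ℝ,
      (∑ k ∈ Finset.range (n + 1), S n (k : ℤ) * q ^ k) =
        (a / 2) ^ n * (Ppoly (2 * b / a) n).eval ((2 * c / a) * q - 1) := by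
  intro n
  induction n with
  | zero => intro q; simp [hS0, Ppoly]
  | succ n ih =>
    intro q
    set δ := 2 * b / a with hδ
    set u : ℝ := (2 * c / a) * q - 1 with hu
    -- derivative identity from ih
    have hfun : (fun x : ℝ => ∑ k ∈ Finset.range (n + 1), S n (k : ℤ) * x ^ k)
        = fun x : ℝ => (a / 2) ^ n * (Ppoly δ n).eval ((2 * c / a) * x - 1) :=
      funext fun x => ih x
    have hD1 : HasDerivAt (fun x : ℝ => ∑ k ∈ Finset.range (n + 1), S n (k : ℤ) * x ^ k)
        (∑ k ∈ Finset.range (n + 1), S n (k : ℤ) * ((k : ℝ) * q ^ (k - 1))) q :=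
      HasDerivAt.fun_sum fun k _ => (hasDerivAt_pow k q).const_mul (S n (k : ℤ))
    have hinner : HasDerivAt (fun x : ℝ => (2 * c / a) * x - 1) (2 * c / a) q := by
      simpa using ((hasDerivAt_id q).const_mul (2 * c / a)).sub_const 1
    have hD2 : HasDerivAt (fun x : ℝ => (a / 2) ^ n * (Ppoly δ n).eval ((2 * c / a) * x - 1))
        ((a / 2) ^ n * ((derivative (Ppoly δ n)).eval u * (2 * c / a))) q :=
      (((Polynomial.hasDerivAt (Ppoly δ n) u).comp q hinner)).const_mul _
    have key : (∑ k ∈ Finset.range (n + 1), S n (k : ℤ) * ((k : ℝ) * q ^ (k - 1)))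
        = (a / 2) ^ n * ((derivative (Ppoly δ n)).eval u * (2 * c / a)) :=
      (hfun ▸ hD1).unique hD2
    -- Dn' = q * raw derivative sum
    have hDn' : (∑ k ∈ Finset.range (n + 1), (k : ℝ) * S n (k : ℤ) * q ^ k)
        = q * ∑ k ∈ Finset.range (n + 1), S n (k : ℤ) * ((k : ℝ) * q ^ (k - 1)) := by
      rw [Finset.mul_sum]
      refine Finset.sum_congr rfl fun k _ => ?_
      cases k with
      | zero => simp
      | succ m => rw [Nat.succ_sub_one, pow_succ]; push_cast; ring
    -- split the new sum
    have hsplit : (∑ k ∈ Finset.range (n + 2), S (n + 1) (k : ℤ) * q ^ k)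
        = (∑ k ∈ Finset.range (n + 2), (a * (k : ℝ) + b) * S n (k : ℤ) * q ^ k)
          + ∑ k ∈ Finset.range (n + 2),
              c * ((n : ℝ) + 2 - 2 * (k : ℝ)) * S n ((k : ℤ) - 1) * q ^ k := by
      rw [← Finset.sum_add_distrib]
      refine Finset.sum_congr rfl fun k _ => ?_
      rw [hSrec n (k : ℤ)]
      push_cast
      ring
    have hE1 : (∑ k ∈ Finset.range (n + 2), (a * (k : ℝ) + b) * S n (k : ℤ) * q ^ k)
        = ∑ k ∈ Finset.range (n + 1), (a * (k : ℝ) + b) * S n (k : ℤ) * q ^ k := by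
      have hz : S n (((n + 1 : ℕ) : ℤ)) = 0 :=
        hSb n _ (Or.inr (by push_cast; omega))
      rw [Finset.sum_range_succ, hz]
      ring
    have hE2 : (∑ k ∈ Finset.range (n + 2),
          c * ((n : ℝ) + 2 - 2 * (k : ℝ)) * S n ((k : ℤ) - 1) * q ^ k)
        = ∑ k ∈ Finset.range (n + 1),
            c * ((n : ℝ) - 2 * (k : ℝ)) * S n (k : ℤ) * q ^ k * q := by
      rw [Finset.sum_range_succ']
      have h0 : S n (((0 : ℕ) : ℤ) - 1) = 0 := hSb n _ (Or.inl (by omega))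
      rw [h0]
      rw [mul_zero, zero_mul, add_zero]
      refine Finset.sum_congr rfl fun k _ => ?_
      have hc : S n (((k + 1 : ℕ) : ℤ) - 1) = S n (k : ℤ) := by
        congr 1; push_cast; ring
      rw [hc]
      push_cast
      ring
    rw [hsplit, hE1, hE2]
    -- combined below
    -- express both sums via An and Dn'
    have hAn := ih q
    have ecomb : (∑ k ∈ Finset.range (n + 1), (a * (k : ℝ) + b) * S n (k : ℤ) * q ^ k)
        + (∑ k ∈ Finset.range (n + 1),
            c * ((n : ℝ) - 2 * (k : ℝ)) * S n (k : ℤ) * q ^ k * q)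
        = (a - 2 * c * q) * (∑ k ∈ Finset.range (n + 1), (k : ℝ) * S n (k : ℤ) * q ^ k)
          + (b + c * (n : ℝ) * q) * (∑ k ∈ Finset.range (n + 1), S n (k : ℤ) * q ^ k) := by
      rw [Finset.mul_sum, Finset.mul_sum, ← Finset.sum_add_distrib, ← Finset.sum_add_distrib]
      exact Finset.sum_congr rfl fun k _ => by ring
    rw [ecomb, hDn', key, hAn]
    rw [show Ppoly δ (n + 1) = -2 * (X * (X + 1)) * derivative (Ppoly δ n)
      + (C δ + C (n : ℝ) * (X + 1)) * Ppoly δ n from rfl]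
    simp only [eval_add, eval_mul, eval_neg, eval_X, eval_one, eval_C, neg_mul, eval_ofNat]
    rw [hδ, hu]
    field_simp
    ring

lemma Ppoly_eval (δ : ℝ) : ∀ n : ℕ, ∀ u : ℝ, 0 < u →
    (Ppoly δ n).eval u = Real.sqrt u ^ n * (Qpoly δ n).eval (1 / Real.sqrt u) := by
  intro n
  induction n with
  | zero => intro u hu; simp [Ppoly, Qpoly]
  | succ n ih =>
    intro u hu
    set s := Real.sqrt u with hs_def
    have hs : 0 < s := Real.sqrt_pos.2 hu
    have hsq : s ^ 2 = u := Real.sq_sqrt hu.le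
    have hsne : s ≠ 0 := hs.ne'
    -- derivative computation
    have h1 : HasDerivAt Real.sqrt (1 / (2 * s)) u := Real.hasDerivAt_sqrt hu.ne'
    have h2 : HasDerivAt (fun v => Real.sqrt v ^ n)
        ((n : ℝ) * s ^ (n - 1) * (1 / (2 * s))) u := h1.pow n
    have h3 : HasDerivAt (fun v => (Real.sqrt v)⁻¹)
        (-(1 / (2 * s)) / s ^ 2) u := h1.inv hsne
    have h4 : HasDerivAt (fun v => (Qpoly δ n).eval (Real.sqrt v)⁻¹)
        ((derivative (Qpoly δ n)).eval s⁻¹ * (-(1 / (2 * s)) / s ^ 2)) u :=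
      by have := (Polynomial.hasDerivAt (Qpoly δ n) s⁻¹).comp u h3; exact this
    have h5 : HasDerivAt (fun v => Real.sqrt v ^ n * (Qpoly δ n).eval (Real.sqrt v)⁻¹)
        ((n : ℝ) * s ^ (n - 1) * (1 / (2 * s)) * (Qpoly δ n).eval s⁻¹
          + s ^ n * ((derivative (Qpoly δ n)).eval s⁻¹ * (-(1 / (2 * s)) / s ^ 2))) u :=
      h2.mul h4
    have heq : (fun v => (Ppoly δ n).eval v)
        =ᶠ[nhds u] (fun v => Real.sqrt v ^ n * (Qpoly δ n).eval (Real.sqrt v)⁻¹) := by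
      filter_upwards [eventually_gt_nhds hu] with v hv
      rw [ih v hv, one_div]
    have h6 : HasDerivAt (fun v => (Ppoly δ n).eval v)
        ((n : ℝ) * s ^ (n - 1) * (1 / (2 * s)) * (Qpoly δ n).eval s⁻¹
          + s ^ n * ((derivative (Qpoly δ n)).eval s⁻¹ * (-(1 / (2 * s)) / s ^ 2))) u :=
      h5.congr_of_eventuallyEq heq
    have key : (derivative (Ppoly δ n)).eval u
        = (n : ℝ) * s ^ (n - 1) * (1 / (2 * s)) * (Qpoly δ n).eval s⁻¹
          + s ^ n * ((derivative (Qpoly δ n)).eval s⁻¹ * (-(1 / (2 * s)) / s ^ 2)) :=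
      (Polynomial.hasDerivAt (Ppoly δ n) u).unique h6
    have hpow : (n : ℝ) * s ^ (n - 1) = (n : ℝ) * s ^ n / s := by
      cases n with
      | zero => simp
      | succ m => rw [Nat.succ_sub_one, pow_succ]; field_simp
    rw [show Ppoly δ (n+1) = -2 * (X * (X + 1)) * derivative (Ppoly δ n)
      + (C δ + C (n : ℝ) * (X + 1)) * Ppoly δ n from rfl,
      show Qpoly δ (n+1) = (1 + X ^ 2) * derivative (Qpoly δ n) + C δ * X * Qpoly δ n from rfl]
    simp only [eval_add, eval_mul, eval_neg, eval_ofNat, eval_X, eval_one, eval_C, eval_pow,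
      neg_mul, eval_neg]
    rw [key, ih u hu, ← hsq, one_div]
    rw [hpow, Real.sqrt_sq hs.le]
    field_simp
    ring

theorem row_generating_eq_general_derivative_polynomial
    (a b c : ℝ) (ha : 0 < a) (hb : 0 < b) (hc : 0 < c)
    (S : ℕ → ℤ → ℝ)
    (hS0 : S 0 0 = 1)
    (hSb : ∀ (n : ℕ) (k : ℤ), (k < 0 ∨ (n : ℤ) + 1 < 2 * k) → S n k = 0)
    (hSrec : ∀ (n : ℕ) (k : ℤ),
      S (n + 1) k =
        (a * (k : ℝ) + b) * S n k +
        c * ((n : ℝ) + 1 - 2 * (k : ℝ) + 1) * S n (k - 1)) :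
    ∀ n : ℕ, ∀ q : ℝ, 1 < q → 0 < (2 * c / a) * q - 1 →
      (∑ k ∈ Finset.range (n + 1), S n (k : ℤ) * q ^ k) =
        (a / 2) ^ n * Real.sqrt ((2 * c / a) * q - 1) ^ n *
          (Qpoly (2 * b / a) n).eval (1 / Real.sqrt ((2 * c / a) * q - 1)) := by
  intro n q _hq hu
  rw [sum_eq_Ppoly a b c ha.ne' S hS0 hSb hSrec n q,
    Ppoly_eval (2 * b / a) n _ hu, mul_assoc]
end

section
/- Let W_{n,k} satisfy W_{n,k} = (2k+1)W_{n-1,k} + (n-2k+1)W_{n-1,k-1} with W_{0,0} = 1 (and W_{n,k}=0 for k<0 or 2k>n+1), and let Z̃(n,k) satisfy Z̃(n,k) = (2k+1)Z̃(n-1,k) + 3Z̃(n-1,k-1) + 2(n-k+1)Z̃(n-1,k-2) with Z̃(0,0)=1 and Z̃(n,k)=0 unless 0 ≤ k ≤ n. Then for all n ≥ 0 the row-generating functions satisfy Z̃_n(x) = (1+x)^n·W_{n+1}(2x/(1+x)), as polynomial identities. -/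
open Polynomial Finset

-- helper: X*(1+X)*derivative of C a * X^k
lemma termEX (a : ℝ) (k : ℕ) :
    X * (1 + X) * derivative (C a * X ^ k) =
      C (k : ℝ) * (1 + X) * (C a * X ^ k) := by
  rw [derivative_C_mul_X_pow]
  cases k with
  | zero => simp
  | succ k =>
    rw [Nat.succ_sub_one]
    push_cast
    simp only [C_add, C_mul, C_1]
    ring

lemma termER (a : ℝ) (k m : ℕ) :
    X * (1 + X) * derivative (C a * (C 2 * X) ^ k * (1 + X) ^ m) =
      (C (k : ℝ) * (1 + X) + C (m : ℝ) * X) * (C a * (C 2 * X) ^ k * (1 + X) ^ m) := by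
  have h1 : X * derivative ((C (2:ℝ) * X) ^ k) = C (k : ℝ) * (C 2 * X) ^ k := by
    rw [derivative_pow]
    cases k with
    | zero => simp
    | succ k =>
      rw [Nat.succ_sub_one]
      simp only [derivative_mul, derivative_C, derivative_X]
      push_cast
      simp only [C_add, C_mul, C_1]
      ring
  have h2 : (1 + X) * derivative ((1 + (X : ℝ[X])) ^ m) = C (m : ℝ) * (1 + X) ^ m := by
    rw [derivative_pow]
    cases m with
    | zero => simp
    | succ m =>
      rw [Nat.succ_sub_one]
      simp only [derivative_add, derivative_one, derivative_X]
      push_cast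
      simp only [C_add, C_mul, C_1]
      ring
  rw [derivative_mul, derivative_mul, derivative_C]
  calc X * (1 + X) * ((0 * (C 2 * X) ^ k + C a * derivative ((C 2 * X) ^ k)) * (1 + X) ^ m
        + C a * (C 2 * X) ^ k * derivative ((1 + X) ^ m))
      = C a * (1 + X) ^ m * (1 + X) * (X * derivative ((C 2 * X) ^ k))
        + C a * (C 2 * X) ^ k * X * ((1 + X) * derivative ((1 + X) ^ m)) := by ring
    _ = _ := by rw [h1, h2]; ring

lemma Lrec (Z : ℕ → ℤ → ℝ)
    (hZb : ∀ (n : ℕ) (k : ℤ), (k < 0 ∨ (n : ℤ) < k) → Z n k = 0)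
    (hZrec : ∀ (n : ℕ) (k : ℤ),
      Z (n + 1) k = (2 * (k : ℝ) + 1) * Z n k + 3 * Z n (k - 1) +
          2 * ((n : ℝ) + 1 - (k : ℝ) + 1) * Z n (k - 2))
    (termEX : ∀ (a : ℝ) (k : ℕ), X * (1 + X) * derivative (C a * X ^ k) =
      C (k : ℝ) * (1 + X) * (C a * X ^ k))
    (n : ℕ) :
    (∑ k ∈ range (n + 2), C (Z (n+1) (k : ℤ)) * X ^ k) =
      (1 + C 3 * X + C (2*(n:ℝ)) * X ^ 2) * (∑ k ∈ range (n + 1), C (Z n (k : ℤ)) * X ^ k)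
        + C 2 * (1 - X) *
          (X * (1 + X) * derivative (∑ k ∈ range (n + 1), C (Z n (k : ℤ)) * X ^ k)) := by
  have split : (∑ k ∈ range (n + 2), C (Z (n+1) (k : ℤ)) * X ^ k)
      = (∑ k ∈ range (n + 2), C ((2*(k:ℝ)+1) * Z n (k:ℤ)) * X ^ k)
        + ((∑ k ∈ range (n + 2), C (3 * Z n ((k:ℤ)-1)) * X ^ k)
        + (∑ k ∈ range (n + 2), C (2*((n:ℝ)+1-(k:ℝ)+1) * Z n ((k:ℤ)-2)) * X ^ k)) := by
    rw [← Finset.sum_add_distrib, ← Finset.sum_add_distrib]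
    refine Finset.sum_congr rfl fun k _ => ?_
    rw [hZrec n (k:ℤ)]
    push_cast
    simp only [C_add, C_mul]
    ring
  have hA : (∑ k ∈ range (n + 2), C ((2*(k:ℝ)+1) * Z n (k:ℤ)) * X ^ k)
      = ∑ k ∈ range (n + 1), C ((2*(k:ℝ)+1) * Z n (k:ℤ)) * X ^ k := by
    rw [Finset.sum_range_succ]
    have h0 : Z n (((n+1:ℕ)) : ℤ) = 0 :=
      hZb n _ (Or.inr (by exact_mod_cast Nat.lt_succ_self n))
    rw [h0, mul_zero, map_zero, zero_mul, add_zero]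
  have hB : (∑ k ∈ range (n + 2), C (3 * Z n ((k:ℤ)-1)) * X ^ k)
      = ∑ k ∈ range (n + 1), C (3 * Z n (k:ℤ)) * X ^ (k+1) := by
    rw [Finset.sum_range_succ']
    have h0 : Z n (((0:ℕ):ℤ) - 1) = 0 := hZb n _ (Or.inl (by norm_num))
    rw [h0, mul_zero, map_zero, zero_mul, add_zero]
    refine Finset.sum_congr rfl fun k _ => ?_
    have : ((k+1:ℕ):ℤ) - 1 = (k:ℤ) := by push_cast; ring
    rw [this]
  have hC : (∑ k ∈ range (n + 2), C (2*((n:ℝ)+1-(k:ℝ)+1) * Z n ((k:ℤ)-2)) * X ^ k)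
      = ∑ k ∈ range (n + 1), C (2*((n:ℝ)-(k:ℝ)) * Z n (k:ℤ)) * X ^ (k+2) := by
    rw [Finset.sum_range_succ', Finset.sum_range_succ']
    have h0 : Z n (((0:ℕ):ℤ) - 2) = 0 := hZb n _ (Or.inl (by norm_num))
    have h1 : Z n (((0+1:ℕ):ℤ) - 2) = 0 := hZb n _ (Or.inl (by norm_num))
    rw [Finset.sum_range_succ (fun k => C (2*((n:ℝ)-(k:ℝ)) * Z n (k:ℤ)) * X ^ (k+2))]
    rw [h0, h1, mul_zero, mul_zero, map_zero, zero_mul, add_zero, zero_mul, add_zero, sub_self,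
      mul_zero, zero_mul, map_zero, zero_mul, add_zero]
    refine Finset.sum_congr rfl fun k _ => ?_
    have e1 : ((k+1+1:ℕ):ℤ) - 2 = (k:ℤ) := by push_cast; ring
    rw [e1]
    have e2 : (2*((n:ℝ)+1-((k+1+1:ℕ):ℝ)+1)) = 2*((n:ℝ)-(k:ℝ)) := by push_cast; ring
    rw [e2]
  rw [split, hA, hB, hC, derivative_sum, Finset.mul_sum, Finset.mul_sum, Finset.mul_sum,
    ← Finset.sum_add_distrib, ← Finset.sum_add_distrib, ← Finset.sum_add_distrib]
  refine Finset.sum_congr rfl fun k _ => ?_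
  rw [termEX (Z n (k:ℤ)) k]
  simp only [C_add, C_mul, C_1, C_sub, map_ofNat]
  ring

lemma Rrec (W : ℕ → ℤ → ℝ)
    (hWb : ∀ (n : ℕ) (k : ℤ), (k < 0 ∨ (n : ℤ) + 1 < 2 * k) → W n k = 0)
    (hWrec : ∀ (n : ℕ) (k : ℤ),
      W (n + 1) k = (2 * (k : ℝ) + 1) * W n k + ((n : ℝ) + 1 - 2 * (k : ℝ) + 1) * W n (k - 1))
    (termER : ∀ (a : ℝ) (k m : ℕ),
      X * (1 + X) * derivative (C a * (C 2 * X) ^ k * (1 + X) ^ m) =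
      (C (k : ℝ) * (1 + X) + C (m : ℝ) * X) * (C a * (C 2 * X) ^ k * (1 + X) ^ m))
    (n : ℕ) :
    (∑ k ∈ range (n + 2), C (W (n+2) (k : ℤ)) * (C 2 * X) ^ k * (1 + X) ^ (n + 1 - k)) =
      (1 + C 3 * X + C (2*(n:ℝ)) * X ^ 2) *
        (∑ k ∈ range (n + 1), C (W (n+1) (k : ℤ)) * (C 2 * X) ^ k * (1 + X) ^ (n - k))
      + C 2 * (1 - X) * (X * (1 + X) *
          derivative (∑ k ∈ range (n + 1), C (W (n+1) (k : ℤ)) * (C 2 * X) ^ k * (1 + X) ^ (n - k))) := by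
  have hWtop : ∀ m : ℕ, W (m+1) ((m+1:ℕ):ℤ) = 0 := by
    intro m
    cases m with
    | zero =>
      have h01 : W 0 1 = 0 := hWb 0 1 (Or.inr (by norm_num))
      have e : ((0+1:ℕ):ℤ) = 1 := by norm_num
      rw [e, hWrec 0 1, h01]
      norm_num
    | succ m => exact hWb _ _ (Or.inr (by push_cast; omega))
  have split : (∑ k ∈ range (n + 2), C (W (n+2) (k : ℤ)) * (C 2 * X) ^ k * (1 + X) ^ (n + 1 - k))
      = (∑ k ∈ range (n + 2), C ((2*(k:ℝ)+1) * W (n+1) (k:ℤ)) * (C 2 * X) ^ k * (1 + X) ^ (n + 1 - k))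
        + (∑ k ∈ range (n + 2), C (((n:ℝ)+1+1-2*(k:ℝ)+1) * W (n+1) ((k:ℤ)-1)) * (C 2 * X) ^ k * (1 + X) ^ (n + 1 - k)) := by
    rw [← Finset.sum_add_distrib]
    refine Finset.sum_congr rfl fun k _ => ?_
    rw [show (n+2) = (n+1)+1 from rfl, hWrec (n+1) (k:ℤ)]
    push_cast
    simp only [C_add, C_mul]
    ring
  have hA : (∑ k ∈ range (n + 2), C ((2*(k:ℝ)+1) * W (n+1) (k:ℤ)) * (C 2 * X) ^ k * (1 + X) ^ (n + 1 - k))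
      = (∑ k ∈ range (n + 1), C ((2*(k:ℝ)+1) * W (n+1) (k:ℤ)) * (C 2 * X) ^ k * (1 + X) ^ (n - k)) * (1 + X) := by
    rw [Finset.sum_range_succ, hWtop n, mul_zero, map_zero, zero_mul, zero_mul, add_zero,
      Finset.sum_mul]
    refine Finset.sum_congr rfl fun k hk => ?_
    have hkn : k ≤ n := Nat.lt_succ_iff.mp (Finset.mem_range.mp hk)
    rw [show n + 1 - k = (n - k) + 1 from by omega, pow_succ]
    ring
  have hB : (∑ k ∈ range (n + 2), C (((n:ℝ)+1+1-2*(k:ℝ)+1) * W (n+1) ((k:ℤ)-1)) * (C 2 * X) ^ k * (1 + X) ^ (n + 1 - k))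
      = (∑ k ∈ range (n + 1), C (((n:ℝ)+1-2*(k:ℝ)) * W (n+1) (k:ℤ)) * (C 2 * X) ^ k * (1 + X) ^ (n - k)) * (C 2 * X) := by
    rw [Finset.sum_range_succ']
    have h0 : W (n+1) (((0:ℕ):ℤ) - 1) = 0 := hWb _ _ (Or.inl (by norm_num))
    rw [h0, mul_zero, map_zero, zero_mul, zero_mul, add_zero, Finset.sum_mul]
    refine Finset.sum_congr rfl fun k hk => ?_
    have e1 : ((k+1:ℕ):ℤ) - 1 = (k:ℤ) := by push_cast; ring
    have e2 : ((n:ℝ)+1+1-2*((k+1:ℕ):ℝ)+1) = (n:ℝ)+1-2*(k:ℝ) := by push_cast; ring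
    have e3 : n + 1 - (k+1) = n - k := by omega
    rw [e1, e2, e3, pow_succ]
    ring
  rw [split, hA, hB, derivative_sum, Finset.mul_sum, Finset.mul_sum, Finset.mul_sum,
    Finset.sum_mul, Finset.sum_mul, ← Finset.sum_add_distrib, ← Finset.sum_add_distrib]
  refine Finset.sum_congr rfl fun k hk => ?_
  have hkn : k ≤ n := Nat.lt_succ_iff.mp (Finset.mem_range.mp hk)
  rw [termER (W (n+1) (k:ℤ)) k (n-k), Nat.cast_sub hkn]
  simp only [C_add, C_mul, C_1, C_sub, map_ofNat]
  ring

theorem alternating_runs_type_B_identity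
    (W Z : ℕ → ℤ → ℝ)
    (hW0 : W 0 0 = 1)
    (hWb : ∀ (n : ℕ) (k : ℤ), (k < 0 ∨ (n : ℤ) + 1 < 2 * k) → W n k = 0)
    (hWrec : ∀ (n : ℕ) (k : ℤ),
      W (n + 1) k =
        (2 * (k : ℝ) + 1) * W n k + ((n : ℝ) + 1 - 2 * (k : ℝ) + 1) * W n (k - 1))
    (hZ0 : Z 0 0 = 1)
    (hZb : ∀ (n : ℕ) (k : ℤ), (k < 0 ∨ (n : ℤ) < k) → Z n k = 0)
    (hZrec : ∀ (n : ℕ) (k : ℤ),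
      Z (n + 1) k =
        (2 * (k : ℝ) + 1) * Z n k + 3 * Z n (k - 1) +
          2 * ((n : ℝ) + 1 - (k : ℝ) + 1) * Z n (k - 2)) :
    ∀ n : ℕ,
      (∑ k ∈ Finset.range (n + 1), C (Z n (k : ℤ)) * X ^ k) =
        ∑ k ∈ Finset.range (n + 1),
          C (W (n + 1) (k : ℤ)) * (C 2 * X) ^ k * (1 + X) ^ (n - k) := by
  intro n
  induction n with
  | zero =>
    have hWm1 : W 0 (((0:ℕ):ℤ) - 1) = 0 := hWb 0 _ (Or.inl (by norm_num))
    have hW10 : W 1 0 = 1 := by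
      rw [hWrec 0 0]
      rw [show ((0:ℤ) - 1) = -1 from by ring, hWb 0 (-1) (Or.inl (by norm_num)), hW0]
      norm_num
    simp [hZ0, hW10, C_1]
  | succ n ih =>
    rw [show n + 1 + 1 = n + 2 from rfl,
      Lrec Z hZb hZrec termEX n, Rrec W hWb hWrec termER n, ih]
end

section
/- Let A_{n,k} satisfy A_{n,k} = (1+k)A_{n-1,k} + (2n-2k+1)A_{n-1,k-1} with A_{0,0}=1, A_{n,k}=0 unless 0 ≤ k ≤ n. Then for every n, the polynomial A_n(q) = Σ_k A_{n,k} q^k has only real zeros. -/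
open Polynomial

-- IVT helper
lemma ivt_aux (f : ℝ[X]) {a b : ℝ} (hab : a < b) (h : eval a f * eval b f < 0) :
    ∃ c, a < c ∧ c < b ∧ eval c f = 0 := by
  have hc : ContinuousOn (fun x => eval x f) (Set.Icc a b) := (f.continuous_aeval).continuousOn
  rcases lt_or_ge (eval a f) 0 with ha | ha
  · have hb : 0 < eval b f := by nlinarith
    have := intermediate_value_Ioo hab.le hc (Set.mem_Ioo.mpr ⟨ha, hb⟩)
    obtain ⟨c, hc1, hc2⟩ := this
    exact ⟨c, hc1.1, hc1.2, hc2⟩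
  · have ha' : 0 < eval a f := by
      rcases ha.lt_or_eq with h' | h'
      · exact h'
      · exfalso; rw [← h'] at h; simp at h
    have hb : eval b f < 0 := by nlinarith
    have := intermediate_value_Ioo' hab.le hc (Set.mem_Ioo.mpr ⟨hb, ha'⟩)
    obtain ⟨c, hc1, hc2⟩ := this
    exact ⟨c, hc1.1, hc1.2, hc2⟩

-- eval of derivative of product
lemma eval_deriv_prod (s : Finset ℕ) (r : ℕ → ℝ) (x : ℝ) :
    eval x (derivative (∏ i ∈ s, (X - C (r i)))) =
      ∑ i ∈ s, ∏ j ∈ s.erase i, (x - r j) := by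
  classical
  induction s using Finset.induction_on with
  | empty => simp
  | @insert a s ha ih =>
    rw [Finset.prod_insert ha, derivative_mul, derivative_sub, derivative_X, derivative_C,
      sub_zero, one_mul]
    rw [Finset.sum_insert ha, Finset.erase_insert ha]
    simp only [eval_add, eval_mul, eval_sub, eval_X, eval_C, ih, eval_prod]
    rw [mul_comm]
    congr 1
    rw [Finset.sum_mul]
    refine Finset.sum_congr rfl fun i hi => ?_
    rw [mul_comm]
    rw [Finset.erase_insert_of_ne (by rintro rfl; exact ha hi)]
    rw [Finset.prod_insert (by simp [ha, Finset.mem_erase])]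

section
variable (A : ℕ → ℤ → ℝ)

lemma coeffP (hAb : ∀ (n : ℕ) (k : ℤ), (k < 0 ∨ (n : ℤ) < k) → A n k = 0) (n m : ℕ) :
    (∑ k ∈ Finset.range (n + 1), C (A n (k : ℤ)) * X ^ k).coeff m = A n (m : ℤ) := by
  rw [finset_sum_coeff]
  simp only [coeff_C_mul, coeff_X_pow, mul_ite, mul_one, mul_zero]
  rw [Finset.sum_ite_eq]
  by_cases h : m ∈ Finset.range (n + 1)
  · simp [h]
  · simp only [h, if_false]
    refine (hAb n m (Or.inr ?_)).symm
    simp only [Finset.mem_range, not_lt] at h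
    push_cast; omega

lemma Adiag (hA0 : A 0 0 = 1)
    (hAb : ∀ (n : ℕ) (k : ℤ), (k < 0 ∨ (n : ℤ) < k) → A n k = 0)
    (hArec : ∀ (n : ℕ) (k : ℤ),
      A (n + 1) k =
        (1 + (k : ℝ)) * A n k + (2 * ((n : ℝ) + 1) - 2 * (k : ℝ) + 1) * A n (k - 1)) :
    ∀ n : ℕ, A n (n : ℤ) = 1 := by
  intro n
  induction n with
  | zero => exact_mod_cast hA0
  | succ n ih =>
    have h := hArec n ((n : ℤ) + 1)
    rw [hAb n ((n : ℤ) + 1) (Or.inr (by omega))] at h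
    have harg : ((n : ℤ) + 1 - 1) = (n : ℤ) := by ring
    rw [harg] at h
    have : ((n : ℕ) + 1 : ℤ) = ((n : ℤ) + 1) := by push_cast; ring
    push_cast at h ⊢
    rw [h, ih]; ring
end

section
variable (A : ℕ → ℤ → ℝ)

lemma rec_poly
    (hAb : ∀ (n : ℕ) (k : ℤ), (k < 0 ∨ (n : ℤ) < k) → A n k = 0)
    (hArec : ∀ (n : ℕ) (k : ℤ),
      A (n + 1) k =
        (1 + (k : ℝ)) * A n k + (2 * ((n : ℝ) + 1) - 2 * (k : ℝ) + 1) * A n (k - 1))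
    (n : ℕ) :
    (∑ k ∈ Finset.range (n + 2), C (A (n + 1) (k : ℤ)) * X ^ k) =
      (∑ k ∈ Finset.range (n + 1), C (A n (k : ℤ)) * X ^ k)
        + C (2 * (n : ℝ) + 1) * ((∑ k ∈ Finset.range (n + 1), C (A n (k : ℤ)) * X ^ k) * X)
        + (derivative (∑ k ∈ Finset.range (n + 1), C (A n (k : ℤ)) * X ^ k) * X
           - C 2 * (derivative (∑ k ∈ Finset.range (n + 1), C (A n (k : ℤ)) * X ^ k) * X ^ 2)) := by
  set P : ℝ[X] := ∑ k ∈ Finset.range (n + 1), C (A n (k : ℤ)) * X ^ k with hP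
  have hc : ∀ m : ℕ, P.coeff m = A n (m : ℤ) := coeffP A hAb n
  ext m
  rw [show (n + 2) = (n + 1) + 1 from rfl, coeffP A hAb (n + 1) m]
  simp only [coeff_add, coeff_sub, coeff_C_mul]
  match m with
  | 0 =>
    simp only [mul_coeff_zero, coeff_X_zero, coeff_X_pow, mul_zero]
    norm_num
    rw [hArec n 0, hAb n ((0 : ℤ) - 1) (Or.inl (by omega)), hc 0]
    push_cast; ring
  | 1 =>
    have hx2 : derivative P * X ^ 2 = derivative P * X * X := by ring
    rw [hx2, coeff_mul_X, coeff_mul_X, coeff_mul_X, mul_coeff_zero, coeff_X_zero, mul_zero]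
    simp only [coeff_derivative, hc]
    rw [hArec n ((1 : ℕ) : ℤ)]
    rw [show ((1 : ℕ) : ℤ) - 1 = ((0 : ℕ) : ℤ) by norm_num]
    push_cast; ring
  | (m + 2) =>
    have hx2 : derivative P * X ^ 2 = derivative P * X * X := by ring
    rw [hx2, coeff_mul_X, coeff_mul_X, coeff_mul_X, coeff_mul_X]
    simp only [coeff_derivative, hc]
    rw [hArec n ((m + 2 : ℕ) : ℤ)]
    rw [show ((m + 2 : ℕ) : ℤ) - 1 = ((m + 1 : ℕ) : ℤ) by push_cast; ring]
    push_cast; ring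
end

lemma key (A : ℕ → ℤ → ℝ)
    (hA0 : A 0 0 = 1)
    (hAb : ∀ (n : ℕ) (k : ℤ), (k < 0 ∨ (n : ℤ) < k) → A n k = 0)
    (hArec : ∀ (n : ℕ) (k : ℤ),
      A (n + 1) k =
        (1 + (k : ℝ)) * A n k + (2 * ((n : ℝ) + 1) - 2 * (k : ℝ) + 1) * A n (k - 1)) :
    ∀ n : ℕ, ∃ r : ℕ → ℝ,
      (∀ i j, i < j → j < n → r i < r j) ∧ (∀ i, i < n → r i < 0) ∧
      (∑ k ∈ Finset.range (n + 1), C (A n (k : ℤ)) * X ^ k) =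
        ∏ i ∈ Finset.range n, (X - C (r i)) := by
  intro n
  induction n with
  | zero =>
    refine ⟨fun _ => 0, by omega, by omega, ?_⟩
    simp [hA0]
  | succ n ih =>
    obtain ⟨r, hmono, hneg, hfac⟩ := ih
    set P : ℝ[X] := ∏ i ∈ Finset.range n, (X - C (r i)) with hPdef
    set Q : ℝ[X] := ∑ k ∈ Finset.range (n + 2), C (A (n + 1) (k : ℤ)) * X ^ k with hQdef
    have hQ : Q = P + C (2 * (n : ℝ) + 1) * (P * X)
        + (derivative P * X - C 2 * (derivative P * X ^ 2)) := by
      rw [hQdef, rec_poly A hAb hArec n, hfac]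
    have hevalQ : ∀ x : ℝ, eval x Q =
        (1 + (2 * (n : ℝ) + 1) * x) * eval x P
          + (x - 2 * x ^ 2) * eval x (derivative P) := by
      intro x
      rw [hQ]
      simp only [eval_add, eval_mul, eval_sub, eval_C, eval_X, eval_pow]
      ring
    have hevalP : ∀ x : ℝ, eval x P = ∏ i ∈ Finset.range n, (x - r i) := by
      intro x; rw [hPdef]; simp [eval_prod]
    have htop : Q.coeff (n + 1) = 1 := by
      rw [hQdef]
      rw [show n + 2 = (n + 1) + 1 from rfl, coeffP A hAb (n + 1) (n + 1)]
      exact Adiag A hA0 hAb hArec (n + 1)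
    have hdegle : Q.natDegree ≤ n + 1 := by
      refine natDegree_le_iff_coeff_eq_zero.mpr fun m hm => ?_
      rw [hQdef, show n + 2 = (n + 1) + 1 from rfl, coeffP A hAb (n + 1) m]
      exact hAb (n + 1) m (Or.inr (by exact_mod_cast hm))
    have hQne : Q ≠ 0 := fun h => by simp [h] at htop
    have hdeg : Q.natDegree = n + 1 :=
      le_antisymm hdegle (le_natDegree_of_ne_zero (by rw [htop]; exact one_ne_zero))
    have hmonic : Q.Monic := by rw [Monic, leadingCoeff, hdeg, htop]
    -- derivative eval at roots
    have hDeriv : ∀ j, j < n → eval (r j) (derivative P) =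
        ∏ k ∈ (Finset.range n).erase j, (r j - r k) := by
      intro j hj
      rw [hPdef, eval_deriv_prod]
      refine Finset.sum_eq_single_of_mem j (Finset.mem_range.mpr hj) fun i hi hij => ?_
      refine Finset.prod_eq_zero (Finset.mem_erase.mpr ⟨fun h => hij h.symm, Finset.mem_range.mpr hj⟩) ?_
      exact sub_self _
    have hDsign : ∀ j, j < n → 0 < (-1 : ℝ) ^ (n - 1 - j) * eval (r j) (derivative P) := by
      intro j hj
      rw [hDeriv j hj]
      have hsplit : (Finset.range n).erase j = Finset.range j ∪ Finset.Ico (j + 1) n := by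
        ext k
        simp only [Finset.mem_erase, Finset.mem_range, Finset.mem_union, Finset.mem_Ico]
        omega
      have hdisj : Disjoint (Finset.range j) (Finset.Ico (j + 1) n) := by
        rw [Finset.disjoint_left]
        intro k hk hk'
        simp only [Finset.mem_range] at hk
        simp only [Finset.mem_Ico] at hk'
        omega
      rw [hsplit, Finset.prod_union hdisj]
      have h1 : 0 < ∏ k ∈ Finset.range j, (r j - r k) :=
        Finset.prod_pos fun k hk => sub_pos.mpr (hmono k j (Finset.mem_range.mp hk) hj)
      have h3 : 0 < ∏ k ∈ Finset.Ico (j + 1) n, (r k - r j) :=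
        Finset.prod_pos fun k hk => by
          have := Finset.mem_Ico.mp hk
          exact sub_pos.mpr (hmono j k (by omega) (by omega))
      have hcard : (Finset.Ico (j + 1) n).card = n - 1 - j := by
        rw [Nat.card_Ico]; omega
      have h2 : ∏ k ∈ Finset.Ico (j + 1) n, (r j - r k)
          = (-1 : ℝ) ^ (n - 1 - j) * ∏ k ∈ Finset.Ico (j + 1) n, (r k - r j) := by
        rw [← hcard, ← Finset.prod_const, ← Finset.prod_mul_distrib]
        exact Finset.prod_congr rfl fun k hk => by ring
      rw [h2]
      have h4 : ((-1 : ℝ) ^ (n - 1 - j)) ^ 2 = 1 := by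
        rw [← pow_mul, mul_comm (n - 1 - j) 2, pow_mul]
        norm_num
      have h5 : (-1 : ℝ) ^ (n - 1 - j) *
          ((∏ k ∈ Finset.range j, (r j - r k)) *
            ((-1 : ℝ) ^ (n - 1 - j) * ∏ k ∈ Finset.Ico (j + 1) n, (r k - r j)))
          = ((∏ k ∈ Finset.range j, (r j - r k)) * ∏ k ∈ Finset.Ico (j + 1) n, (r k - r j))
              * ((-1 : ℝ) ^ (n - 1 - j)) ^ 2 := by ring
      rw [h5, h4, mul_one]
      exact mul_pos h1 h3
    -- sign of Q at the r j
    have hQr : ∀ j, j < n → 0 < (-1 : ℝ) ^ (n - j) * eval (r j) Q := by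
      intro j hj
      have hPr : eval (r j) P = 0 := by
        rw [hevalP]
        exact Finset.prod_eq_zero (Finset.mem_range.mpr hj) (sub_self _)
      rw [hevalQ, hPr, mul_zero, zero_add]
      have hrj := hneg j hj
      have hneg' : -(r j * (1 - 2 * r j)) > 0 := by nlinarith
      have hD := hDsign j hj
      have hnj : n - j = (n - 1 - j) + 1 := by omega
      rw [hnj, pow_succ]
      have h5 : 0 < ((-1 : ℝ) ^ (n - 1 - j) * eval (r j) (derivative P))
          * (-(r j * (1 - 2 * r j))) := mul_pos hD hneg'
      nlinarith [h5]
    have hQ0 : 0 < eval 0 Q := by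
      have h := hevalQ 0
      norm_num at h
      rw [h, hevalP]
      refine Finset.prod_pos fun i hi => ?_
      have := hneg i (Finset.mem_range.mp hi)
      linarith
    -- a point far to the left with the right sign
    have hx0 : ∃ x0 : ℝ, x0 < 0 ∧ (∀ j, j < n → x0 < r j) ∧
        0 < (-1 : ℝ) ^ (n + 1) * eval x0 Q := by
      set R : ℝ[X] := C ((-1 : ℝ) ^ (n + 1)) * Q.comp (-X) with hR
      have hnX : ((-X : ℝ[X])).natDegree = 1 := by
        rw [natDegree_neg, natDegree_X]
      have hcompne : Q.comp (-X) ≠ 0 := fun h => by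
        have := natDegree_comp (p := Q) (q := (-X : ℝ[X]))
        rw [h, natDegree_zero, hnX, hdeg] at this
        omega
      have hlcnX : ((-X : ℝ[X])).leadingCoeff = -1 := by
        rw [leadingCoeff_neg, leadingCoeff_X]
      have hlc : (Q.comp (-X)).leadingCoeff = (-1 : ℝ) ^ (n + 1) := by
        rw [leadingCoeff_comp (by rw [hnX]; omega), hmonic.leadingCoeff, one_mul, hlcnX, hdeg]
      have hRlc : R.leadingCoeff = 1 := by
        rw [hR, leadingCoeff_mul, leadingCoeff_C, hlc, ← pow_add]
        exact Even.neg_one_pow ⟨n + 1, by ring⟩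
      have hRne : R ≠ 0 := fun h => by rw [h, leadingCoeff_zero] at hRlc; exact one_ne_zero hRlc.symm
      have hRdeg : 0 < R.degree := by
        have h1 : R.natDegree = n + 1 := by
          rw [hR, natDegree_C_mul (by positivity : ((-1 : ℝ) ^ (n + 1)) ≠ 0),
            natDegree_comp, hnX, hdeg, mul_one]
        rw [degree_eq_natDegree hRne, h1]
        exact_mod_cast Nat.succ_pos n
      have htend := tendsto_atTop_of_leadingCoeff_nonneg R hRdeg (by rw [hRlc]; norm_num)
      have hev : ∀ᶠ x : ℝ in Filter.atTop, 0 < eval x R := htend.eventually_gt_atTop 0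
      have hbig : ∀ᶠ x : ℝ in Filter.atTop, (∑ j ∈ Finset.range n, |r j|) < x :=
        Filter.eventually_gt_atTop _
      obtain ⟨x, hx1, hx2⟩ := (hbig.and hev).exists
      have hsum_nonneg : 0 ≤ ∑ j ∈ Finset.range n, |r j| :=
        Finset.sum_nonneg fun j _ => abs_nonneg _
      refine ⟨-x, by linarith, fun j hj => ?_, ?_⟩
      · have h1 : |r j| ≤ ∑ j ∈ Finset.range n, |r j| :=
          Finset.single_le_sum (fun i _ => abs_nonneg (r i)) (Finset.mem_range.mpr hj)
        have h2 : -(r j) ≤ |r j| := neg_le_abs _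
        linarith
      · have heval : eval x R = (-1 : ℝ) ^ (n + 1) * eval (-x) Q := by
          rw [hR, eval_mul, eval_C, eval_comp, eval_neg, eval_X]
        rw [← heval]
        exact hx2
    obtain ⟨x0, hx0neg, hx0lt, hx0sign⟩ := hx0
    -- chain of sample points
    set s : ℕ → ℝ := fun i => if i = 0 then x0 else if i = n + 1 then 0 else r (i - 1) with hs
    have hs0 : s 0 = x0 := by simp [hs]
    have hsn : s (n + 1) = 0 := by simp [hs]
    have hsr : ∀ j, j < n → s (j + 1) = r j := by
      intro j hj
      simp only [hs]
      rw [if_neg (by omega), if_neg (by omega)]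
      norm_num
    have hs_lt : ∀ i, i ≤ n → s i < s (i + 1) := by
      intro i hi
      rcases Nat.eq_or_lt_of_le hi with h | h
      · -- i = n : s n < s (n+1) = 0
        subst h
        rw [hsn]
        rcases Nat.eq_zero_or_pos i with h0 | h0
        · subst h0; rw [hs0]; exact hx0neg
        · have : i - 1 < i := by omega
          rw [show s i = r (i - 1) by simp only [hs]; rw [if_neg (by omega), if_neg (by omega)]]
          exact hneg (i - 1) (by omega)
      · -- i < n
        rcases Nat.eq_zero_or_pos i with h0 | h0
        · subst h0
          rw [hs0, hsr 0 h]
          exact hx0lt 0 h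
        · rw [show s i = r (i - 1) by simp only [hs]; rw [if_neg (by omega), if_neg (by omega)],
            hsr i h]
          exact hmono (i - 1) i (by omega) h
    have hsign : ∀ i, i ≤ n + 1 → 0 < (-1 : ℝ) ^ (n + 1 - i) * eval (s i) Q := by
      intro i hi
      rcases Nat.eq_zero_or_pos i with h0 | h0
      · subst h0; rw [hs0]; simpa using hx0sign
      · rcases Nat.eq_or_lt_of_le hi with h | h
        · subst h
          rw [hsn, Nat.sub_self, pow_zero, one_mul]
          exact hQ0
        · have hj : i - 1 < n := by omega
          rw [show s i = r (i - 1) by simp only [hs]; rw [if_neg (by omega), if_neg (by omega)]]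
          have := hQr (i - 1) hj
          rw [show n + 1 - i = n - (i - 1) by omega]
          exact this
    -- roots via IVT
    have hroot : ∀ i : ℕ, ∃ c : ℝ, i ≤ n → (s i < c ∧ c < s (i + 1) ∧ eval c Q = 0) := by
      intro i
      by_cases hi : i ≤ n
      · have h1 := hsign i (by omega)
        have h2 := hsign (i + 1) (by omega)
        rw [show n + 1 - (i + 1) = n - i by omega] at h2
        have hee : (-1 : ℝ) ^ (n + 1 - i) * (-1 : ℝ) ^ (n - i) = -1 := by
          rw [← pow_add]
          exact Odd.neg_one_pow ⟨n - i, by omega⟩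
        have hprod : eval (s i) Q * eval (s (i + 1)) Q < 0 := by
          have heq : ((-1 : ℝ) ^ (n + 1 - i) * eval (s i) Q) *
              ((-1 : ℝ) ^ (n - i) * eval (s (i + 1)) Q)
              = ((-1 : ℝ) ^ (n + 1 - i) * (-1 : ℝ) ^ (n - i)) *
                  (eval (s i) Q * eval (s (i + 1)) Q) := by ring
          rw [hee] at heq
          nlinarith [mul_pos h1 h2]
        obtain ⟨c, hc1, hc2, hc3⟩ := ivt_aux Q (hs_lt i hi) hprod
        exact ⟨c, fun _ => ⟨hc1, hc2, hc3⟩⟩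
      · exact ⟨0, fun h => absurd h hi⟩
    choose q hq using hroot
    -- monotonicity of s (weak, on [0, n+1])
    have hsle : ∀ a b : ℕ, a ≤ b → b ≤ n + 1 → s a ≤ s b := by
      intro a b hab hb
      induction b with
      | zero =>
        have : a = 0 := by omega
        subst this; exact le_refl _
      | succ b ihb =>
        rcases Nat.lt_or_ge a (b + 1) with h | h
        · exact le_trans (ihb (by omega) (by omega)) (hs_lt b (by omega)).le
        · have : a = b + 1 := by omega
          subst this; exact le_refl _
    have hqmono : ∀ i j, i < j → j < n + 1 → q i < q j := by
      intro i j hij hj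
      have hi' : i ≤ n := by omega
      have hj' : j ≤ n := by omega
      have h1 := hq i hi'
      have h2 := hq j hj'
      have h3 : s (i + 1) ≤ s j := hsle (i + 1) j (by omega) (by omega)
      linarith [h1.2.1, h2.1]
    have hqneg : ∀ i, i < n + 1 → q i < 0 := by
      intro i hi
      have h1 := hq i (by omega)
      have h2 : s (i + 1) ≤ s (n + 1) := hsle (i + 1) (n + 1) (by omega) (le_refl _)
      rw [hsn] at h2
      linarith [h1.2.1]
    -- factorization of Q from its n+1 roots
    have hdvd : (∏ i ∈ Finset.range (n + 1), (X - C (q i))) ∣ Q := by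
      refine Finset.prod_dvd_of_coprime ?_ ?_
      · intro i hi j hj hij
        simp only [Finset.coe_range, Set.mem_Iio] at hi hj
        have hne : q i ≠ q j := by
          rcases lt_or_gt_of_ne hij with h | h
          · exact ne_of_lt (hqmono i j h hj)
          · exact (ne_of_lt (hqmono j i h hi)).symm
        exact isCoprime_X_sub_C_of_isUnit_sub (sub_ne_zero_of_ne hne).isUnit
      · intro i hi
        rw [dvd_iff_isRoot]
        exact (hq i (by simpa using Nat.lt_succ_iff.mp (Finset.mem_range.mp hi))).2.2
    obtain ⟨u, hu⟩ := hdvd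
    set F : ℝ[X] := ∏ i ∈ Finset.range (n + 1), (X - C (q i)) with hF
    have hFmonic : F.Monic := monic_prod_of_monic _ _ fun i _ => monic_X_sub_C (q i)
    have hFdeg : F.natDegree = n + 1 := by
      rw [hF, natDegree_prod _ _ fun i _ => X_sub_C_ne_zero (q i)]
      simp [natDegree_X_sub_C]
    have hune : u ≠ 0 := by
      rintro rfl
      rw [mul_zero] at hu
      exact hQne hu
    have hudeg : u.natDegree = 0 := by
      have h := natDegree_mul hFmonic.ne_zero hune
      rw [← hu, hdeg, hFdeg] at h
      omega
    have hulc : u.coeff 0 = 1 := by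
      have h1 : Q.leadingCoeff = F.leadingCoeff * u.leadingCoeff := by
        rw [hu, leadingCoeff_mul]
      rw [hmonic.leadingCoeff, hFmonic.leadingCoeff, one_mul] at h1
      rw [leadingCoeff, hudeg] at h1
      exact h1.symm
    have hu1 : u = 1 := by
      rw [eq_C_of_natDegree_eq_zero hudeg, hulc, map_one]
    rw [hu1, mul_one] at hu
    exact ⟨q, hqmono, hqneg, hu⟩

theorem flower_triangle_real_rooted
    (A : ℕ → ℤ → ℝ)
    (hA0 : A 0 0 = 1)
    (hAb : ∀ (n : ℕ) (k : ℤ), (k < 0 ∨ (n : ℤ) < k) → A n k = 0)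
    (hArec : ∀ (n : ℕ) (k : ℤ),
      A (n + 1) k =
        (1 + (k : ℝ)) * A n k + (2 * ((n : ℝ) + 1) - 2 * (k : ℝ) + 1) * A n (k - 1)) :
    ∀ n : ℕ, ∀ z : ℂ,
      (Polynomial.aeval z) (∑ k ∈ Finset.range (n + 1), C (A n (k : ℤ)) * X ^ k) = 0 →
        z.im = 0 := by
  intro n z hz
  obtain ⟨r, -, -, hfac⟩ := key A hA0 hAb hArec n
  rw [hfac, map_prod] at hz
  simp only [map_sub, aeval_X, aeval_C] at hz
  obtain ⟨i, -, hi⟩ := Finset.prod_eq_zero_iff.mp hz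
  have hz' : z = algebraMap ℝ ℂ (r i) := sub_eq_zero.mp hi
  rw [hz']
  exact Complex.ofReal_im (r i)
end

section
/- The staircase-tableau numbers satisfy the explicit formula T_{n,m} = Σ_{k,i,j ≥ 0} C(n-k, m-k)·C(n-i, k-i)·C(1/2 + i, i)·C(i,j)·(-2)^k·(-1)^j·(1+j)^n for all n, m ≥ 0, where C(1/2+i, i) is the generalized binomial coefficient. -/
noncomputable def Bs (n i : ℕ) : ℝ :=
  ∑ j ∈ Finset.range (i + 1), (i.choose j : ℝ) * (-1) ^ j * (1 + (j : ℝ)) ^ n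

noncomputable def es (i : ℕ) : ℝ := 2 ^ i * genChoose (1 / 2 + (i : ℝ)) i

noncomputable def Gs (n m : ℕ) : ℝ :=
  (-1) ^ m * ∑ i ∈ Finset.range (m + 1), ((n - i).choose (m - i) : ℝ) * es i * Bs n i

lemma Bs_zero (n : ℕ) : Bs n 0 = 1 := by simp [Bs]

lemma Bs_one (n : ℕ) : Bs n 1 = 1 - 2 ^ n := by
  simp [Bs, Finset.sum_range_succ]
  ring

lemma choose_mul_real (a t : ℕ) :
    ((t : ℝ) + 1) * (a.choose (t + 1) : ℝ) = ((a : ℝ) - t) * (a.choose t : ℝ) := by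
  rcases le_or_gt t a with h | h
  · have := Nat.choose_succ_right_eq a t
    have hc := congrArg (fun x : ℕ => (x : ℝ)) this
    push_cast [Nat.cast_sub h] at hc
    linarith
  · rw [Nat.choose_eq_zero_of_lt h, Nat.choose_eq_zero_of_lt (by omega)]
    ring

lemma Bs_rec (n i : ℕ) :
    Bs (n + 1) (i + 1) = ((i : ℝ) + 2) * Bs n (i + 1) - ((i : ℝ) + 1) * Bs n i := by
  have hext : Bs n i = ∑ j ∈ Finset.range (i + 2), (i.choose j : ℝ) * (-1) ^ j * (1 + (j : ℝ)) ^ n := by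
    rw [Bs, Finset.sum_range_succ (n := i + 1)]
    simp [Nat.choose_succ_self]
  rw [Bs, Bs, hext, Finset.mul_sum, Finset.mul_sum, ← Finset.sum_sub_distrib]
  refine Finset.sum_congr rfl fun j hj => ?_
  have hj' : j ≤ i + 1 := by simpa [Nat.lt_succ_iff] using hj
  have key : ((i + 1).choose j : ℝ) * ((i : ℝ) + 1 - j) = ((i : ℝ) + 1) * (i.choose j : ℝ) := by
    have h := Nat.choose_mul_succ_eq i j
    have hc := congrArg (fun x : ℕ => (x : ℝ)) h
    push_cast [Nat.cast_sub hj'] at hc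
    linarith
  have hp : (1 + (j : ℝ)) ^ (n + 1) = (1 + (j : ℝ)) ^ n * (1 + j) := by ring
  rw [hp]
  linear_combination (-(-1 : ℝ) ^ j * (1 + (j : ℝ)) ^ n) * key

lemma Bs_vanish : ∀ n i : ℕ, n < i → Bs n i = 0 := by
  intro n
  induction n with
  | zero =>
    intro i hi
    have h := add_pow (-1 : ℝ) 1 i
    rw [show (-1 : ℝ) + 1 = 0 by ring, zero_pow (by omega)] at h
    rw [Bs, show (0 : ℝ) = ∑ k ∈ Finset.range (i + 1), (-1 : ℝ) ^ k * 1 ^ (i - k) * (i.choose k : ℝ) from h]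
    refine Finset.sum_congr rfl fun j hj => ?_
    simp
    ring
  | succ n ih =>
    intro i hi
    match i, hi with
    | k + 1, hi =>
      rw [Bs_rec, ih k (by omega), ih (k + 1) (by omega)]
      ring

lemma es_zero : es 0 = 1 := by simp [es, genChoose]

lemma es_one : es 1 = 3 := by
  simp [es, genChoose]
  norm_num

lemma es_rec (i : ℕ) : ((i : ℝ) + 1) * es (i + 1) = (2 * (i : ℝ) + 3) * es i := by
  rw [es, es, genChoose, genChoose]
  rw [Finset.prod_range_succ']
  have hprod : (∏ x ∈ Finset.range i, ((1 : ℝ) / 2 + (((i + 1 : ℕ)) : ℝ) - ((x + 1 : ℕ) : ℝ)))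
      = ∏ x ∈ Finset.range i, ((1 : ℝ) / 2 + (i : ℝ) - (x : ℝ)) := by
    refine Finset.prod_congr rfl fun x _ => ?_
    push_cast; ring
  rw [hprod, Nat.factorial_succ]
  have hfac : (Nat.factorial i : ℝ) ≠ 0 := by positivity
  have hi1 : ((i : ℝ) + 1) ≠ 0 := by positivity
  push_cast
  field_simp
  ring

lemma Gs_zero (n : ℕ) : Gs n 0 = 1 := by
  simp [Gs, es_zero, Bs_zero]

lemma Gs_vanish {n m : ℕ} (h : n < m) : Gs n m = 0 := by
  rw [Gs]
  rw [Finset.sum_eq_zero, mul_zero]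
  intro i hi
  rcases le_or_gt i n with hin | hin
  · rw [Nat.choose_eq_zero_of_lt (by omega)]
    simp
  · rw [Bs_vanish n i hin]
    ring

lemma Gs_one (n : ℕ) : Gs n 1 = 3 * 2 ^ n - (n : ℝ) - 3 := by
  simp [Gs, Finset.sum_range_succ, Bs_zero, Bs_one, es_zero, es_one, Nat.choose_one_right]
  ring

lemma choose_prod (N M s : ℕ) (hs : s ≤ M) :
    N.choose s * (N - s).choose (M - s) = N.choose M * M.choose s := by
  rcases le_or_gt M N with h | h
  · exact (Nat.choose_mul hs).symm
  · rw [Nat.choose_eq_zero_of_lt h, zero_mul]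
    rcases le_or_gt s N with h2 | h2
    · rw [Nat.choose_eq_zero_of_lt (show N - s < M - s by omega), mul_zero]
    · rw [Nat.choose_eq_zero_of_lt h2, zero_mul]

lemma L1 (N M : ℕ) :
    ∑ s ∈ Finset.range (M + 1), ((N - s).choose (M - s) : ℝ) * (N.choose s : ℝ) * (-2) ^ s
      = (-1) ^ M * (N.choose M : ℝ) := by
  have h := add_pow (-2 : ℝ) 1 M
  rw [show (-2 : ℝ) + 1 = -1 by ring] at h
  calc ∑ s ∈ Finset.range (M + 1), ((N - s).choose (M - s) : ℝ) * (N.choose s : ℝ) * (-2) ^ s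
      = ∑ s ∈ Finset.range (M + 1), (N.choose M : ℝ) * ((-2) ^ s * 1 ^ (M - s) * (M.choose s : ℝ)) := by
        refine Finset.sum_congr rfl fun s hs => ?_
        have hsM : s ≤ M := by simpa [Nat.lt_succ_iff] using hs
        have hc := congrArg (fun x : ℕ => (x : ℝ)) (choose_prod N M s hsM)
        push_cast at hc
        rw [one_pow]
        linear_combination ((-2 : ℝ) ^ s) * hc
    _ = (N.choose M : ℝ) * ((-1 : ℝ) ^ M) := by rw [← Finset.mul_sum, ← h]
    _ = (-1) ^ M * (N.choose M : ℝ) := by ring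

lemma collapse (n m : ℕ) :
    (∑ k ∈ Finset.range (m + 1), ∑ i ∈ Finset.range (k + 1), ∑ j ∈ Finset.range (i + 1),
        ((n - k).choose (m - k) : ℝ) * ((n - i).choose (k - i) : ℝ) *
          genChoose (1 / 2 + (i : ℝ)) i * (i.choose j : ℝ) *
          (-2 : ℝ) ^ k * (-1 : ℝ) ^ j * (1 + (j : ℝ)) ^ n)
    = Gs n m := by
  set f : ℕ → ℕ → ℝ := fun k i =>
    ((n - k).choose (m - k) : ℝ) * ((n - i).choose (k - i) : ℝ) *
      genChoose (1 / 2 + (i : ℝ)) i * (-2 : ℝ) ^ k * Bs n i with hf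
  have step1 : (∑ k ∈ Finset.range (m + 1), ∑ i ∈ Finset.range (k + 1), ∑ j ∈ Finset.range (i + 1),
        ((n - k).choose (m - k) : ℝ) * ((n - i).choose (k - i) : ℝ) *
          genChoose (1 / 2 + (i : ℝ)) i * (i.choose j : ℝ) *
          (-2 : ℝ) ^ k * (-1 : ℝ) ^ j * (1 + (j : ℝ)) ^ n)
      = ∑ k ∈ Finset.range (m + 1), ∑ i ∈ Finset.range (k + 1), f k i := by
    refine Finset.sum_congr rfl fun k _ => Finset.sum_congr rfl fun i _ => ?_
    rw [hf]
    simp only []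
    rw [Bs, Finset.mul_sum]
    refine Finset.sum_congr rfl fun j _ => ?_
    ring
  have hswap : (∑ k ∈ Finset.range (m + 1), ∑ i ∈ Finset.range (k + 1), f k i)
      = ∑ i ∈ Finset.range (m + 1), ∑ k ∈ Finset.Ico i (m + 1), f k i := by
    simp only [Finset.range_eq_Ico]
    exact (Finset.sum_Ico_Ico_comm 0 (m + 1) fun i k => f k i).symm
  have step3 : ∀ i ∈ Finset.range (m + 1), (∑ k ∈ Finset.Ico i (m + 1), f k i)
      = genChoose (1 / 2 + (i : ℝ)) i * Bs n i *
          ((-2 : ℝ) ^ i * ((-1 : ℝ) ^ (m - i) * ((n - i).choose (m - i) : ℝ))) := by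
    intro i hi
    have him : i ≤ m := by simpa [Nat.lt_succ_iff] using hi
    rw [Finset.sum_Ico_eq_sum_range, show m + 1 - i = (m - i) + 1 by omega]
    calc (∑ s ∈ Finset.range ((m - i) + 1), f (i + s) i)
        = (genChoose (1 / 2 + (i : ℝ)) i * Bs n i * (-2 : ℝ) ^ i) *
            ∑ s ∈ Finset.range ((m - i) + 1),
              ((n - i - s).choose (m - i - s) : ℝ) * ((n - i).choose s : ℝ) * (-2) ^ s := by
          rw [Finset.mul_sum]
          refine Finset.sum_congr rfl fun s _ => ?_
          rw [hf]
          simp only [Nat.sub_add_eq, Nat.add_sub_cancel_left, pow_add]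
          ring
      _ = _ := by rw [L1]; ring
  rw [step1, hswap, Finset.sum_congr rfl step3, Gs, Finset.mul_sum]
  refine Finset.sum_congr rfl fun i hi => ?_
  have him : i ≤ m := by simpa [Nat.lt_succ_iff] using hi
  have hpw : (-1 : ℝ) ^ i * (-1 : ℝ) ^ (m - i) = (-1 : ℝ) ^ m := by
    rw [← pow_add]; congr 1; omega
  rw [es, show ((-2 : ℝ)) ^ i = (-1 : ℝ) ^ i * 2 ^ i by
    rw [show (-2 : ℝ) = (-1) * 2 by norm_num, mul_pow]]
  linear_combination (genChoose (1 / 2 + (i : ℝ)) i * Bs n i *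
    ((n - i).choose (m - i) : ℝ) * 2 ^ i) * hpw

lemma coeff_id (n m i : ℕ) (him : i ≤ m) :
    ((i : ℝ) + 1) * (((n + 1 - i).choose (m + 2 - i) : ℝ) * es i * Bs n i)
      - (2 * (i : ℝ) + 3) * (((n - i).choose (m + 1 - i) : ℝ) * es i * Bs n i)
    = ((m : ℝ) + 3) * (((n - i).choose (m + 2 - i) : ℝ) * es i * Bs n i)
      - ((n : ℝ) + 2) * (((n - i).choose (m + 1 - i) : ℝ) * es i * Bs n i)
      + ((n : ℝ) - (m : ℝ)) * (((n - i).choose (m - i) : ℝ) * es i * Bs n i) := by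
  rcases le_or_gt i n with hin | hin
  · obtain ⟨a, rfl⟩ : ∃ a, n = i + a := ⟨n - i, by omega⟩
    obtain ⟨t, rfl⟩ : ∃ t, m = i + t := ⟨m - i, by omega⟩
    simp only [show i + a + 1 - i = a + 1 from by omega, show i + a - i = a from by omega,
      show i + t + 2 - i = t + 2 from by omega, show i + t + 1 - i = t + 1 from by omega,
      show i + t - i = t from by omega]
    have h1 : ((a + 1).choose (t + 2) : ℝ) = (a.choose (t + 1) : ℝ) + (a.choose (t + 2) : ℝ) := by
      rw [Nat.choose_succ_succ']
      push_cast
      ring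
    have h3 := choose_mul_real a t
    have h2 := choose_mul_real a (t + 1)
    push_cast at h2 ⊢
    linear_combination (es i * Bs (i + a) i) * (((i : ℝ) + 1) * h1 - h2 + h3)
  · rw [Bs_vanish n i hin]
    ring

lemma Bs_rec' (n : ℕ) : ∀ i : ℕ, Bs (n + 1) i = ((i : ℝ) + 1) * Bs n i - (i : ℝ) * Bs n (i - 1) := by
  intro i
  cases i with
  | zero => simp [Bs_zero]
  | succ k =>
    rw [Bs_rec, Nat.add_sub_cancel]
    push_cast
    ring

lemma Gs_rec (n m : ℕ) :
    Gs (n + 1) (m + 2) =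
      ((m : ℝ) + 3) * Gs n (m + 2) + ((n : ℝ) + 2) * Gs n (m + 1) + ((n : ℝ) - m) * Gs n m := by
  have hSL : (∑ i ∈ Finset.range (m + 2 + 1), ((n + 1 - i).choose (m + 2 - i) : ℝ) * es i * Bs (n + 1) i)
      = (∑ i ∈ Finset.range (m + 2 + 1), ((i : ℝ) + 1) * (((n + 1 - i).choose (m + 2 - i) : ℝ) * es i * Bs n i))
        - ∑ i ∈ Finset.range (m + 1 + 1), (2 * (i : ℝ) + 3) * (((n - i).choose (m + 1 - i) : ℝ) * es i * Bs n i) := by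
    have e1 : ∀ i ∈ Finset.range (m + 2 + 1),
        ((n + 1 - i).choose (m + 2 - i) : ℝ) * es i * Bs (n + 1) i
          = ((i : ℝ) + 1) * (((n + 1 - i).choose (m + 2 - i) : ℝ) * es i * Bs n i)
            - (i : ℝ) * (((n + 1 - i).choose (m + 2 - i) : ℝ) * es i * Bs n (i - 1)) := by
      intro i _
      rw [Bs_rec' n i]
      ring
    rw [Finset.sum_congr rfl e1, Finset.sum_sub_distrib]
    congr 1
    rw [Finset.sum_range_succ']
    simp only [Nat.cast_zero, zero_mul, add_zero]
    refine Finset.sum_congr rfl fun i _ => ?_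
    simp only [Nat.succ_sub_succ, Nat.sub_zero, Nat.add_sub_cancel]
    have he := es_rec i
    push_cast
    linear_combination (((n - i).choose (m + 1 - i) : ℝ) * Bs n i) * he
  have hsum : (∑ i ∈ Finset.range (m + 1),
        (((i : ℝ) + 1) * (((n + 1 - i).choose (m + 2 - i) : ℝ) * es i * Bs n i)
          - (2 * (i : ℝ) + 3) * (((n - i).choose (m + 1 - i) : ℝ) * es i * Bs n i)))
      = ∑ i ∈ Finset.range (m + 1),
        (((m : ℝ) + 3) * (((n - i).choose (m + 2 - i) : ℝ) * es i * Bs n i)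
          - ((n : ℝ) + 2) * (((n - i).choose (m + 1 - i) : ℝ) * es i * Bs n i)
          + ((n : ℝ) - (m : ℝ)) * (((n - i).choose (m - i) : ℝ) * es i * Bs n i)) := by
    refine Finset.sum_congr rfl fun i hi => ?_
    exact coeff_id n m i (by simpa [Nat.lt_succ_iff] using hi)
  rw [Finset.sum_sub_distrib] at hsum
  rw [Finset.sum_add_distrib, Finset.sum_sub_distrib, ← Finset.mul_sum, ← Finset.mul_sum,
    ← Finset.mul_sum] at hsum
  have hextra :
      ((m + 1 : ℕ) + 1 : ℝ) * (((n + 1 - (m + 1)).choose (m + 2 - (m + 1)) : ℝ) * es (m + 1) * Bs n (m + 1))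
        + ((m + 2 : ℕ) + 1 : ℝ) * (((n + 1 - (m + 2)).choose (m + 2 - (m + 2)) : ℝ) * es (m + 2) * Bs n (m + 2))
        - (2 * (m + 1 : ℕ) + 3 : ℝ) * (((n - (m + 1)).choose (m + 1 - (m + 1)) : ℝ) * es (m + 1) * Bs n (m + 1))
      = ((m : ℝ) + 3) * (((n - (m + 1)).choose (m + 2 - (m + 1)) : ℝ) * es (m + 1) * Bs n (m + 1))
        + ((m : ℝ) + 3) * (((n - (m + 2)).choose (m + 2 - (m + 2)) : ℝ) * es (m + 2) * Bs n (m + 2))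
        - ((n : ℝ) + 2) * (((n - (m + 1)).choose (m + 1 - (m + 1)) : ℝ) * es (m + 1) * Bs n (m + 1)) := by
    simp only [show m + 2 - (m + 1) = 1 from by omega, show m + 2 - (m + 2) = 0 from by omega,
      show m + 1 - (m + 1) = 0 from by omega, show n + 1 - (m + 1) = n - m from by omega,
      Nat.choose_zero_right, Nat.choose_one_right, Nat.cast_one]
    by_cases hnm : m + 1 ≤ n
    · rw [Nat.cast_sub (show m ≤ n by omega), Nat.cast_sub (show m + 1 ≤ n by omega)]
      push_cast
      ring
    · rw [Bs_vanish n (m + 1) (by omega), Bs_vanish n (m + 2) (by omega)]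
      ring
  rw [Gs, Gs, Gs, Gs, hSL]
  rw [Finset.sum_range_succ (n := m + 2), Finset.sum_range_succ (n := m + 1),
    Finset.sum_range_succ (f := fun i => (2 * (i : ℝ) + 3) * (((n - i).choose (m + 1 - i) : ℝ) * es i * Bs n i)) (n := m + 1),
    Finset.sum_range_succ (f := fun i => ((n - i).choose (m + 2 - i) : ℝ) * es i * Bs n i) (n := m + 2),
    Finset.sum_range_succ (f := fun i => ((n - i).choose (m + 2 - i) : ℝ) * es i * Bs n i) (n := m + 1),
    Finset.sum_range_succ (f := fun i => ((n - i).choose (m + 1 - i) : ℝ) * es i * Bs n i) (n := m + 1)]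
  have hm2 : (-1 : ℝ) ^ (m + 2) = (-1 : ℝ) ^ m := by rw [pow_succ, pow_succ]; ring
  have hm1 : (-1 : ℝ) ^ (m + 1) = -(-1 : ℝ) ^ m := by rw [pow_succ]; ring
  rw [hm2, hm1]
  linear_combination ((-1 : ℝ) ^ m) * hsum + ((-1 : ℝ) ^ m) * hextra

theorem staircase_tableaux_explicit_formula
    (T : ℕ → ℤ → ℝ)
    (hT0 : T 0 0 = 1)
    (hTb : ∀ (n : ℕ) (k : ℤ), (k < 0 ∨ (n : ℤ) < k) → T n k = 0)
    (hTrec : ∀ (n : ℕ) (k : ℤ),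
      T (n + 1) k =
        ((k : ℝ) + 1) * T n k + ((n : ℝ) + 1 + 1) * T n (k - 1) +
          ((n : ℝ) + 1 - (k : ℝ) + 1) * T n (k - 2)) :
    ∀ n m : ℕ, T n (m : ℤ) =
      ∑ k ∈ Finset.range (m + 1), ∑ i ∈ Finset.range (k + 1), ∑ j ∈ Finset.range (i + 1),
        ((n - k).choose (m - k) : ℝ) * ((n - i).choose (k - i) : ℝ) *
          genChoose (1 / 2 + (i : ℝ)) i * (i.choose j : ℝ) *
          (-2 : ℝ) ^ k * (-1 : ℝ) ^ j * (1 + (j : ℝ)) ^ n := by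
  have hG : ∀ n m : ℕ, T n (m : ℤ) = Gs n m := by
    intro n
    induction n with
    | zero =>
      intro m
      match m with
      | 0 => rw [Nat.cast_zero, hT0, Gs_zero]
      | (k + 1) =>
        rw [hTb 0 ((k + 1 : ℕ) : ℤ) (Or.inr (by exact_mod_cast Nat.succ_pos k)),
          Gs_vanish (Nat.succ_pos k)]
    | succ n ih =>
      intro m
      match m with
      | 0 =>
        rw [hTrec, show (((0 : ℕ) : ℤ)) - 1 = -1 from by norm_num,
          show (((0 : ℕ) : ℤ)) - 2 = -2 from by norm_num,
          hTb n (-1) (Or.inl (by norm_num)), hTb n (-2) (Or.inl (by norm_num)),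
          ih 0, Gs_zero, Gs_zero]
        norm_num
      | 1 =>
        rw [hTrec, show (((1 : ℕ) : ℤ)) - 1 = ((0 : ℕ) : ℤ) from by norm_num,
          show (((1 : ℕ) : ℤ)) - 2 = -1 from by norm_num,
          hTb n (-1) (Or.inl (by norm_num)), ih 1, ih 0,
          Gs_one n, Gs_zero n, Gs_one (n + 1)]
        push_cast
        ring
      | (k + 2) =>
        rw [hTrec, show ((((k + 2) : ℕ)) : ℤ) - 1 = (((k + 1) : ℕ) : ℤ) from by push_cast; ring,
          show ((((k + 2) : ℕ)) : ℤ) - 2 = ((k : ℕ) : ℤ) from by push_cast; ring,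
          ih (k + 2), ih (k + 1), ih k, Gs_rec n k]
        push_cast
        ring
  intro n m
  rw [hG n m]
  exact (collapse n m).symm
end

section
/- Let A_{n,k} satisfy A_{n,k} = (n/d)·A_{n-1,k} + (n + k - 1)·A_{n-1,k-1} with A_{0,0}=1 and A_{n,k}=0 unless 0 ≤ k ≤ n, where d > 0. Let T*_{n,k} satisfy T*_{n,k} = n·T*_{n-1,k} + (2n+k-1)·T*_{n-1,k-1} - (n-k+1)·T*_{n-1,k-2} with T*_{0,0}=1 and T*_{n,k}=0 unless 0 ≤ k ≤ n. Then for all n ≥ 1, the row-generating functions satisfy T*_n(x) = d^n·(1+x)^n·A_n(x/(d(1+x))). -/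
open Polynomial

/-- Clipped binomial coefficient with integer lower index. -/
noncomputable def lamCh (m : ℕ) (i : ℤ) : ℝ :=
  if 0 ≤ i then (m.choose i.toNat : ℝ) else 0

lemma lamCh_neg (m : ℕ) (i : ℤ) (h : i < 0) : lamCh m i = 0 := by
  simp [lamCh, not_le.mpr h]

lemma lamCh_of_nonneg (m : ℕ) (i : ℤ) (h : 0 ≤ i) :
    lamCh m i = (m.choose i.toNat : ℝ) := by simp [lamCh, h]

lemma lamCh_pascal (m : ℕ) (i : ℤ) : lamCh (m + 1) i = lamCh m i + lamCh m (i - 1) := by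
  rcases lt_trichotomy i 0 with h | h | h
  · rw [lamCh_neg _ _ h, lamCh_neg _ _ h, lamCh_neg _ _ (by omega)]; ring
  · subst h
    rw [lamCh_of_nonneg _ _ le_rfl, lamCh_of_nonneg _ _ le_rfl,
      lamCh_neg _ _ (by omega)]
    simp
  · obtain ⟨s, hs⟩ : ∃ s : ℕ, i = (s : ℤ) + 1 := ⟨(i - 1).toNat, by omega⟩
    subst hs
    rw [lamCh_of_nonneg _ _ (by omega), lamCh_of_nonneg _ _ (by omega),
      lamCh_of_nonneg _ _ (by omega)]
    have h1 : ((s : ℤ) + 1).toNat = s + 1 := by omega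
    have h2 : ((s : ℤ) + 1 - 1).toNat = s := by omega
    rw [h1, h2, Nat.choose_succ_succ']
    push_cast; ring

lemma lamCh_absorb (m : ℕ) (i : ℤ) :
    (i : ℝ) * lamCh m i = ((m : ℝ) - (i : ℝ) + 1) * lamCh m (i - 1) := by
  rcases lt_trichotomy i 0 with h | h | h
  · rw [lamCh_neg _ _ h, lamCh_neg _ _ (by omega)]; ring
  · subst h; rw [lamCh_neg m (0 - 1) (by omega)]; simp
  · obtain ⟨s, hs⟩ : ∃ s : ℕ, i = (s : ℤ) + 1 := ⟨(i - 1).toNat, by omega⟩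
    subst hs
    rw [lamCh_of_nonneg _ _ (by omega), lamCh_of_nonneg _ _ (by omega)]
    have h1 : ((s : ℤ) + 1).toNat = s + 1 := by omega
    have h2 : ((s : ℤ) + 1 - 1).toNat = s := by omega
    rw [h1, h2]
    by_cases hsm : s ≤ m
    · have := Nat.choose_succ_right_eq m s
      have hc : ((m.choose (s + 1) : ℝ)) * (s + 1) = (m.choose s : ℝ) * ((m : ℝ) - s) := by
        have := congrArg (fun x : ℕ => (x : ℝ)) this
        push_cast [Nat.cast_sub hsm] at this
        linarith [this]
      push_cast
      linarith [hc]
    · rw [Nat.choose_eq_zero_of_lt (by omega), Nat.choose_eq_zero_of_lt (by omega)]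
      simp

theorem lambert_transformation
    (d : ℝ) (hd : 0 < d)
    (A Tstar : ℕ → ℤ → ℝ)
    (hA0 : A 0 0 = 1)
    (hAb : ∀ (n : ℕ) (k : ℤ), (k < 0 ∨ (n : ℤ) < k) → A n k = 0)
    (hArec : ∀ (n : ℕ) (k : ℤ),
      A (n + 1) k =
        (((n : ℝ) + 1) / d) * A n k + ((n : ℝ) + 1 + (k : ℝ) - 1) * A n (k - 1))
    (hT0 : Tstar 0 0 = 1)
    (hTb : ∀ (n : ℕ) (k : ℤ), (k < 0 ∨ (n : ℤ) < k) → Tstar n k = 0)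
    (hTrec : ∀ (n : ℕ) (k : ℤ),
      Tstar (n + 1) k =
        ((n : ℝ) + 1) * Tstar n k + (2 * ((n : ℝ) + 1) + (k : ℝ) - 1) * Tstar n (k - 1) -
          ((n : ℝ) + 1 - (k : ℝ) + 1) * Tstar n (k - 2)) :
    ∀ n : ℕ, 1 ≤ n →
      (∑ k ∈ Finset.range (n + 1), C (Tstar n (k : ℤ)) * X ^ k) =
        ∑ k ∈ Finset.range (n + 1),
          C (A n (k : ℤ) * d ^ (n - k)) * X ^ k * (1 + X) ^ (n - k) := by
  have hd0 : d ≠ 0 := ne_of_gt hd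
  set S : ℕ → ℤ → ℝ := fun n k =>
    ∑ j ∈ Finset.range (n + 1), A n (j : ℤ) * d ^ (n - j) * lamCh (n - j) (k - (j : ℤ))
    with hSdef
  -- boundary for S
  have hSb : ∀ (n : ℕ) (k : ℤ), (k < 0 ∨ (n : ℤ) < k) → S n k = 0 := by
    intro n k h
    apply Finset.sum_eq_zero
    intro j hj
    rw [Finset.mem_range] at hj
    have hjn : j ≤ n := by omega
    rcases h with h | h
    · rw [lamCh_neg _ _ (by omega)]; ring
    · rw [lamCh_of_nonneg _ _ (by omega)]
      have ht : ((k - (j : ℤ)).toNat : ℤ) = k - j := Int.toNat_of_nonneg (by omega)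
      have hcast : ((n - j : ℕ) : ℤ) = (n : ℤ) - j := by omega
      rw [Nat.choose_eq_zero_of_lt (by omega)]
      simp
  -- initial value
  have hS0 : S 0 0 = 1 := by
    simp [hSdef, hA0, lamCh]
  -- recurrence for S
  have hSrec : ∀ (n : ℕ) (k : ℤ),
      S (n + 1) k =
        ((n : ℝ) + 1) * S n k + (2 * ((n : ℝ) + 1) + (k : ℝ) - 1) * S n (k - 1) -
          ((n : ℝ) + 1 - (k : ℝ) + 1) * S n (k - 2) := by
    intro n k
    have expand : S (n + 1) k =
        (∑ j ∈ Finset.range (n + 2),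
          (((n : ℝ) + 1) / d) * A n (j : ℤ) * d ^ (n + 1 - j) * lamCh (n + 1 - j) (k - j))
        + (∑ j ∈ Finset.range (n + 2),
          ((n : ℝ) + (j : ℝ)) * A n ((j : ℤ) - 1) * d ^ (n + 1 - j) * lamCh (n + 1 - j) (k - j)) := by
      rw [hSdef]
      rw [← Finset.sum_add_distrib]
      apply Finset.sum_congr rfl
      intro j hj
      rw [hArec n (j : ℤ)]
      push_cast
      ring
    -- first sum
    have hU : (∑ j ∈ Finset.range (n + 2),
          (((n : ℝ) + 1) / d) * A n (j : ℤ) * d ^ (n + 1 - j) * lamCh (n + 1 - j) (k - j))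
        = ((n : ℝ) + 1) * S n k + ((n : ℝ) + 1) * S n (k - 1) := by
      rw [Finset.sum_range_succ, hAb n ((n + 1 : ℕ) : ℤ) (by push_cast; omega)]
      have step : ∀ j ∈ Finset.range (n + 1),
          (((n : ℝ) + 1) / d) * A n (j : ℤ) * d ^ (n + 1 - j) * lamCh (n + 1 - j) (k - j)
          = ((n : ℝ) + 1) * (A n (j : ℤ) * d ^ (n - j) * lamCh (n - j) (k - j))
            + ((n : ℝ) + 1) * (A n (j : ℤ) * d ^ (n - j) * lamCh (n - j) (k - 1 - j)) := by
        intro j hj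
        rw [Finset.mem_range] at hj
        have hjn : j ≤ n := by omega
        have h1 : n + 1 - j = (n - j) + 1 := by omega
        rw [h1, lamCh_pascal, pow_succ]
        have hk1 : k - 1 - (j : ℤ) = k - j - 1 := by ring
        rw [hk1]
        field_simp
      rw [Finset.sum_congr rfl step, Finset.sum_add_distrib]
      rw [hSdef]
      simp only [mul_zero, zero_mul, add_zero]
      rw [Finset.mul_sum, Finset.mul_sum]
    -- second sum
    have hV : (∑ j ∈ Finset.range (n + 2),
          ((n : ℝ) + (j : ℝ)) * A n ((j : ℤ) - 1) * d ^ (n + 1 - j) * lamCh (n + 1 - j) (k - j))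
        = ((n : ℝ) + (k : ℝ)) * S n (k - 1) - ((n : ℝ) - (k : ℝ) + 2) * S n (k - 2) := by
      rw [Finset.sum_range_succ']
      have h00 : A n ((0 : ℤ) - 1) = 0 := hAb n ((0 : ℤ) - 1) (by omega)
      simp only [Nat.cast_zero, h00, mul_zero, zero_mul, add_zero]
      have step : ∀ i ∈ Finset.range (n + 1),
          ((n : ℝ) + ((i + 1 : ℕ) : ℝ)) * A n (((i + 1 : ℕ) : ℤ) - 1) * d ^ (n + 1 - (i + 1))
              * lamCh (n + 1 - (i + 1)) (k - ((i + 1 : ℕ) : ℤ))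
          = ((n : ℝ) + (k : ℝ)) * (A n (i : ℤ) * d ^ (n - i) * lamCh (n - i) (k - 1 - i))
            - ((n : ℝ) - (k : ℝ) + 2) * (A n (i : ℤ) * d ^ (n - i) * lamCh (n - i) (k - 2 - i)) := by
        intro i hi
        rw [Finset.mem_range] at hi
        have hin : i ≤ n := by omega
        have h1 : n + 1 - (i + 1) = n - i := by omega
        have h2 : ((i + 1 : ℕ) : ℤ) - 1 = (i : ℤ) := by push_cast; ring
        have h3 : k - ((i + 1 : ℕ) : ℤ) = (k - 1) - i := by push_cast; ring
        rw [h1, h2, h3]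
        have habs := lamCh_absorb (n - i) (k - 1 - (i : ℤ))
        have hcast : (((n - i : ℕ) : ℝ)) = (n : ℝ) - i := by
          push_cast [Nat.cast_sub hin]; ring
        rw [hcast] at habs
        have habs' : ((k : ℝ) - 1 - (i : ℝ)) * lamCh (n - i) (k - 1 - (i : ℤ))
            = ((n : ℝ) - (k : ℝ) + 2) * lamCh (n - i) (k - 2 - (i : ℤ)) := by
          have hc1 : ((k - 1 - (i : ℤ) : ℤ) : ℝ) = (k : ℝ) - 1 - (i : ℝ) := by push_cast; ring
          have hc2 : k - 1 - (i : ℤ) - 1 = k - 2 - (i : ℤ) := by ring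
          rw [hc1, hc2] at habs
          rw [habs]; ring
        have hsplit : ((n : ℝ) + ((i + 1 : ℕ) : ℝ)) = ((n : ℝ) + (k : ℝ)) - ((k : ℝ) - 1 - (i : ℝ)) := by
          push_cast; ring
        rw [hsplit]
        calc (((n : ℝ) + (k : ℝ)) - ((k : ℝ) - 1 - (i : ℝ))) * A n (i : ℤ) * d ^ (n - i)
              * lamCh (n - i) (k - 1 - (i : ℤ))
            = ((n : ℝ) + (k : ℝ)) * (A n (i : ℤ) * d ^ (n - i) * lamCh (n - i) (k - 1 - i))
              - A n (i : ℤ) * d ^ (n - i)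
                * (((k : ℝ) - 1 - (i : ℝ)) * lamCh (n - i) (k - 1 - (i : ℤ))) := by ring
          _ = _ := by rw [habs']; ring
      rw [Finset.sum_congr rfl step, Finset.sum_sub_distrib]
      rw [hSdef]
      rw [Finset.mul_sum, Finset.mul_sum]
    rw [expand, hU, hV]
    ring
  -- uniqueness: Tstar = S
  have hTS : ∀ (n : ℕ) (k : ℤ), Tstar n k = S n k := by
    intro n
    induction n with
    | zero =>
      intro k
      by_cases hk : k = 0
      · subst hk; rw [hT0, hS0]
      · rw [hTb 0 k (by omega), hSb 0 k (by omega)]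
    | succ n ih =>
      intro k
      rw [hTrec n k, ih, ih, ih, ← hSrec n k]
  -- conclude polynomial identity
  intro n _
  apply Polynomial.ext
  intro m
  rw [finset_sum_coeff, finset_sum_coeff]
  have hL : (∑ k ∈ Finset.range (n + 1), (C (Tstar n (k : ℤ)) * X ^ k).coeff m)
      = Tstar n (m : ℤ) := by
    by_cases hm : m ≤ n
    · rw [Finset.sum_eq_single m]
      · simp [coeff_C_mul, coeff_X_pow]
      · intro k hk hkm
        simp [coeff_C_mul, coeff_X_pow, Ne.symm hkm]
      · intro h; exact absurd (Finset.mem_range.mpr (by omega)) h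
    · rw [hTb n (m : ℤ) (by omega)]
      apply Finset.sum_eq_zero
      intro k hk
      rw [Finset.mem_range] at hk
      rw [coeff_C_mul, coeff_X_pow, if_neg (by omega : ¬ m = k), mul_zero]
  have hR : (∑ k ∈ Finset.range (n + 1),
        (C (A n (k : ℤ) * d ^ (n - k)) * X ^ k * (1 + X) ^ (n - k)).coeff m)
      = S n (m : ℤ) := by
    rw [hSdef]
    apply Finset.sum_congr rfl
    intro k hk
    rw [Finset.mem_range] at hk
    have hkn : k ≤ n := by omega
    rw [mul_right_comm, coeff_mul_X_pow']
    by_cases hkm : k ≤ m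
    · rw [if_pos hkm, coeff_C_mul, coeff_one_add_X_pow]
      rw [lamCh_of_nonneg _ _ (by omega)]
      have ht : ((m : ℤ) - (k : ℤ)).toNat = m - k := by omega
      rw [ht]
    · rw [if_neg hkm, lamCh_neg _ _ (by omega)]
      ring
  rw [hL, hR]
  exact hTS n m
end
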